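/- arXiv:1401.6711 — 9 statements merged into one kernel-verified Lean document; each statement's English description precedes it below -/
import Mathlib

section
/- Every graph G with m edges contains at most 2^r * binomial(m, r) copies of K_{r,r} (the complete bipartite graph with both parts of size r). In particular, the number of copies is at most 2*m^r. -/
lemma two_pow_le_two_mul_factorial (r : ℕ) (hr : 1 ≤ r) : 2 ^ r ≤ 2 * r.factorial := by
  induction r with
  | zero => omega
  | succ n ih =>
    rcases Nat.eq_or_lt_of_le hr with h | h
    · simp [← h]
    · have hn : 1 ≤ n := by omega
      calc 2 ^ (n + 1) = 2 * 2 ^ n := by ring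
        _ ≤ 2 * (2 * n.factorial) := by gcongr; exact ih hn
        _ ≤ 2 * ((n + 1) * n.factorial) := by gcongr <;> omega
        _ = 2 * (n + 1).factorial := by rw [Nat.factorial_succ]

/-- Every graph `G` with `m` edges contains at most `2^r * choose m r` copies of `K_{r,r}`,
and in particular at most `2 * m^r` copies. A copy is given by an (ordered) pair of disjoint
`r`-sets with all cross edges present. -/
theorem stmt0 {V : Type*} [Fintype V] (G : SimpleGraph V) (r m : ℕ) (hr : 1 ≤ r)
    (hm : G.edgeSet.ncard = m) :
    {p : Finset V × Finset V |
        p.1.card = r ∧ p.2.card = r ∧ Disjoint p.1 p.2 ∧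
        ∀ a ∈ p.1, ∀ b ∈ p.2, G.Adj a b}.ncard ≤ 2 ^ r * m.choose r ∧
    {p : Finset V × Finset V |
        p.1.card = r ∧ p.2.card = r ∧ Disjoint p.1 p.2 ∧
        ∀ a ∈ p.1, ∀ b ∈ p.2, G.Adj a b}.ncard ≤ 2 * m ^ r := by
  classical
  set S : Set (Finset V × Finset V) := {p : Finset V × Finset V |
      p.1.card = r ∧ p.2.card = r ∧ Disjoint p.1 p.2 ∧
      ∀ a ∈ p.1, ∀ b ∈ p.2, G.Adj a b} with hSdef
  suffices key : S.ncard ≤ 2 ^ r * m.choose r by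
    refine ⟨key, key.trans ?_⟩
    have h1 : r.factorial * m.choose r = m.descFactorial r :=
      (Nat.descFactorial_eq_factorial_mul_choose m r).symm
    have h2 : m.descFactorial r ≤ m ^ r := Nat.descFactorial_le_pow m r
    calc 2 ^ r * m.choose r ≤ (2 * r.factorial) * m.choose r := by
          gcongr; exact two_pow_le_two_mul_factorial r hr
      _ = 2 * (r.factorial * m.choose r) := by ring
      _ = 2 * m.descFactorial r := by rw [h1]
      _ ≤ 2 * m ^ r := by gcongr
  cases isEmpty_or_nonempty V with
  | inl h =>
    have hS0 : S = ∅ := by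
      ext p
      simp only [hSdef, Set.mem_setOf_eq, Set.mem_empty_iff_false, iff_false, not_and]
      intro h1
      exfalso
      have : p.1 = ∅ := Finset.eq_empty_of_isEmpty p.1
      rw [this] at h1
      simp at h1
      omega
    simp [hS0]
  | inr hne =>
    inhabit V
    letI : LinearOrder V := LinearOrder.lift' (Fintype.equivFin V) (Fintype.equivFin V).injective
    -- the `i`-th element of a finset in sorted order
    set nth : Finset V → ℕ → V := fun A i => (A.sort (· ≤ ·)).getD i default with hnth
    have hnth_mem : ∀ (A : Finset V), ∀ i < A.card, nth A i ∈ A := by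
      intro A i hi
      have hlen : i < (A.sort (· ≤ ·)).length := by rwa [Finset.length_sort]
      rw [hnth]
      simp only
      rw [List.getD_eq_getElem _ _ hlen]
      exact Finset.mem_sort (· ≤ ·) |>.mp (List.getElem_mem hlen)
    have hnth_inj : ∀ (A : Finset V), ∀ i < A.card, ∀ j < A.card,
        nth A i = nth A j → i = j := by
      intro A i hi j hj hij
      have hli : i < (A.sort (· ≤ ·)).length := by rwa [Finset.length_sort]
      have hlj : j < (A.sort (· ≤ ·)).length := by rwa [Finset.length_sort]
      rw [hnth] at hij
      simp only at hij
      rw [List.getD_eq_getElem _ _ hli, List.getD_eq_getElem _ _ hlj] at hij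
      exact ((A.sort_nodup (· ≤ ·)).getElem_inj_iff).mp hij
    have hnth_surj : ∀ (A : Finset V), ∀ x ∈ A, ∃ i < A.card, nth A i = x := by
      intro A x hx
      have : x ∈ A.sort (· ≤ ·) := (Finset.mem_sort _).mpr hx
      obtain ⟨i, hi, hix⟩ := List.mem_iff_getElem.mp this
      refine ⟨i, by rwa [Finset.length_sort] at hi, ?_⟩
      rw [hnth]
      simp only
      rw [List.getD_eq_getElem _ _ hi, hix]
    set T : Finset V × Finset V → Finset (Sym2 V) :=
      fun p => (Finset.range r).image (fun i => s(nth p.1 i, nth p.2 i)) with hT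
    set sel : Finset V × Finset V → Finset (Sym2 V) :=
      fun p => (T p).filter (fun e => e.inf ∈ p.1) with hsel
    -- classification of endpoints of a matching edge
    have hcase : ∀ p ∈ S, ∀ i < r,
        (Sym2.inf s(nth p.1 i, nth p.2 i) ∈ p.1 →
          Sym2.inf s(nth p.1 i, nth p.2 i) = nth p.1 i ∧
          Sym2.sup s(nth p.1 i, nth p.2 i) = nth p.2 i) ∧
        (Sym2.inf s(nth p.1 i, nth p.2 i) ∉ p.1 →
          Sym2.inf s(nth p.1 i, nth p.2 i) = nth p.2 i ∧
          Sym2.sup s(nth p.1 i, nth p.2 i) = nth p.1 i) := by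
      rintro p ⟨h1, h2, h3, _⟩ i hi
      have ha : nth p.1 i ∈ p.1 := hnth_mem p.1 i (by omega)
      have hb : nth p.2 i ∈ p.2 := hnth_mem p.2 i (by omega)
      set a := nth p.1 i
      set b := nth p.2 i
      have hinf : Sym2.inf s(a, b) = a ⊓ b := Sym2.inf_mk a b
      have hsup : Sym2.sup s(a, b) = a ⊔ b := Sym2.sup_mk a b
      rcases min_choice a b with hmc | hmc
      · have hle : a ≤ b := by rwa [min_eq_left_iff] at hmc
        have h1' : Sym2.inf s(a, b) = a := by rw [hinf]; exact hmc
        have h2' : Sym2.sup s(a, b) = b := by rw [hsup]; exact max_eq_right hle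
        constructor
        · intro _; exact ⟨h1', h2'⟩
        · intro hcon; rw [h1'] at hcon; exact absurd ha hcon
      · have hle : b ≤ a := by rwa [min_eq_right_iff] at hmc
        have h1' : Sym2.inf s(a, b) = b := by rw [hinf]; exact hmc
        have h2' : Sym2.sup s(a, b) = a := by rw [hsup]; exact max_eq_left hle
        constructor
        · intro hcon
          rw [h1'] at hcon
          exact (Finset.disjoint_left.mp h3 hcon hb).elim
        · intro _; exact ⟨h1', h2'⟩
    -- membership in T
    have hT_mem : ∀ (p : Finset V × Finset V) (e : Sym2 V),
        e ∈ T p ↔ ∃ i < r, e = s(nth p.1 i, nth p.2 i) := by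
      intro p e
      rw [hT]
      simp only [Finset.mem_image, Finset.mem_range]
      constructor
      · rintro ⟨i, hi, rfl⟩; exact ⟨i, hi, rfl⟩
      · rintro ⟨i, hi, rfl⟩; exact ⟨i, hi, rfl⟩
    -- recovery of the two parts from the data (T p, sel p)
    have hrec1 : ∀ p ∈ S, p.1 =
        (sel p).image Sym2.inf ∪ ((T p) \ (sel p)).image Sym2.sup := by
      intro p hp
      obtain ⟨h1, h2, h3, h4⟩ := hp
      ext x
      simp only [Finset.mem_union, Finset.mem_image, Finset.mem_sdiff, hsel,
        Finset.mem_filter]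
      constructor
      · intro hx
        obtain ⟨i, hi, hix⟩ := hnth_surj p.1 x hx
        rw [h1] at hi
        set e := s(nth p.1 i, nth p.2 i) with he
        have heT : e ∈ T p := (hT_mem p e).mpr ⟨i, hi, rfl⟩
        by_cases hin : e.inf ∈ p.1
        · left
          exact ⟨e, ⟨heT, hin⟩, by rw [((hcase p ⟨h1, h2, h3, h4⟩ i hi).1 hin).1, hix]⟩
        · right
          exact ⟨e, ⟨heT, fun h => hin h.2⟩,
            by rw [((hcase p ⟨h1, h2, h3, h4⟩ i hi).2 hin).2, hix]⟩
      · rintro (⟨e, ⟨heT, hin⟩, rfl⟩ | ⟨e, ⟨heT, hnin⟩, rfl⟩)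
        · exact hin
        · obtain ⟨i, hi, rfl⟩ := (hT_mem p e).mp heT
          have hnin' : Sym2.inf s(nth p.1 i, nth p.2 i) ∉ p.1 := fun h => hnin ⟨heT, h⟩
          rw [((hcase p ⟨h1, h2, h3, h4⟩ i hi).2 hnin').2]
          exact hnth_mem p.1 i (by omega)
    have hrec2 : ∀ p ∈ S, p.2 =
        (sel p).image Sym2.sup ∪ ((T p) \ (sel p)).image Sym2.inf := by
      intro p hp
      obtain ⟨h1, h2, h3, h4⟩ := hp
      ext x
      simp only [Finset.mem_union, Finset.mem_image, Finset.mem_sdiff, hsel,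
        Finset.mem_filter]
      constructor
      · intro hx
        obtain ⟨i, hi, hix⟩ := hnth_surj p.2 x hx
        rw [h2] at hi
        set e := s(nth p.1 i, nth p.2 i) with he
        have heT : e ∈ T p := (hT_mem p e).mpr ⟨i, hi, rfl⟩
        by_cases hin : e.inf ∈ p.1
        · left
          exact ⟨e, ⟨heT, hin⟩, by rw [((hcase p ⟨h1, h2, h3, h4⟩ i hi).1 hin).2, hix]⟩
        · right
          exact ⟨e, ⟨heT, fun h => hin h.2⟩,
            by rw [((hcase p ⟨h1, h2, h3, h4⟩ i hi).2 hin).1, hix]⟩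
      · rintro (⟨e, ⟨heT, hin⟩, rfl⟩ | ⟨e, ⟨heT, hnin⟩, rfl⟩)
        · obtain ⟨i, hi, rfl⟩ := (hT_mem p e).mp heT
          rw [((hcase p ⟨h1, h2, h3, h4⟩ i hi).1 hin).2]
          exact hnth_mem p.2 i (by omega)
        · obtain ⟨i, hi, rfl⟩ := (hT_mem p e).mp heT
          have hnin' : Sym2.inf s(nth p.1 i, nth p.2 i) ∉ p.1 := fun h => hnin ⟨heT, h⟩
          rw [((hcase p ⟨h1, h2, h3, h4⟩ i hi).2 hnin').1]
          exact hnth_mem p.2 i (by omega)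
    -- T p is a set of r edges
    have hEF : G.edgeFinset.card = m := by
      rw [← hm, Set.ncard_eq_toFinset_card']
      congr 1
    have hT_sub : ∀ p ∈ S, T p ⊆ G.edgeFinset := by
      rintro p ⟨h1, h2, h3, h4⟩ e he
      obtain ⟨i, hi, rfl⟩ := (hT_mem p e).mp he
      rw [SimpleGraph.mem_edgeFinset, SimpleGraph.mem_edgeSet]
      exact h4 _ (hnth_mem p.1 i (by omega)) _ (hnth_mem p.2 i (by omega))
    have hT_card : ∀ p ∈ S, (T p).card = r := by
      rintro p ⟨h1, h2, h3, h4⟩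
      have hTp : T p = (Finset.range r).image (fun i => s(nth p.1 i, nth p.2 i)) := rfl
      rw [hTp, Finset.card_image_of_injOn, Finset.card_range]
      intro i hi j hj hij
      simp only [Finset.coe_range, Set.mem_Iio, Finset.mem_coe, Finset.mem_range] at hi hj
      rw [Sym2.eq_iff] at hij
      rcases hij with ⟨hij, -⟩ | ⟨hij, -⟩
      · exact hnth_inj p.1 i (by omega) j (by omega) hij
      · exfalso
        have ha : nth p.1 i ∈ p.1 := hnth_mem p.1 i (by omega)
        have hb : nth p.2 j ∈ p.2 := hnth_mem p.2 j (by omega)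
        rw [hij] at ha
        exact Finset.disjoint_left.mp h3 ha hb
    -- the counting
    have hfin : S.Finite := Set.toFinite S
    rw [Set.ncard_eq_toFinset_card S hfin]
    set Q : Finset (Finset (Sym2 V) × Finset (Sym2 V)) :=
      (G.edgeFinset.powersetCard r).biUnion
        (fun t => t.powerset.image (fun s => (t, s))) with hQdef
    have hcard : hfin.toFinset.card ≤ Q.card := by
      apply Finset.card_le_card_of_injOn (fun p => (T p, sel p))
      · intro p hp
        simp only [Finset.mem_coe, Set.Finite.mem_toFinset] at hp
        rw [hQdef, Finset.mem_coe, Finset.mem_biUnion]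
        refine ⟨T p, Finset.mem_powersetCard.mpr ⟨hT_sub p hp, hT_card p hp⟩, ?_⟩
        rw [Finset.mem_image]
        exact ⟨sel p, Finset.mem_powerset.mpr (Finset.filter_subset _ _), rfl⟩
      · intro p hp q hq hpq
        simp only [Finset.mem_coe, Set.Finite.mem_toFinset] at hp hq
        simp only [Prod.mk.injEq] at hpq
        obtain ⟨hTeq, hseleq⟩ := hpq
        have e1 : p.1 = q.1 := by rw [hrec1 p hp, hrec1 q hq, hTeq, hseleq]
        have e2 : p.2 = q.2 := by rw [hrec2 p hp, hrec2 q hq, hTeq, hseleq]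
        exact Prod.ext e1 e2
    refine hcard.trans ?_
    calc Q.card ≤ ∑ t ∈ G.edgeFinset.powersetCard r,
          (t.powerset.image (fun s => (t, s))).card := Finset.card_biUnion_le
      _ ≤ ∑ t ∈ G.edgeFinset.powersetCard r, 2 ^ r := by
          apply Finset.sum_le_sum
          intro t ht
          refine (Finset.card_image_le).trans ?_
          rw [Finset.card_powerset, (Finset.mem_powersetCard.mp ht).2]
      _ = (G.edgeFinset.powersetCard r).card * 2 ^ r := by
          rw [Finset.sum_const, smul_eq_mul]
      _ = 2 ^ r * m.choose r := by
          rw [Finset.card_powersetCard, hEF, mul_comm]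
end

section
/- For every r >= 2, every graph G with m edges contains a K_{r,r}-free subgraph with at least (1/4) * m^{r/(r+1)} edges. -/
open Finset

section Stmt3Aux

/-- Binomial-type identity over powersets. -/
lemma aux_sum_powerset_pow {α : Type*} [DecidableEq α] (F : Finset α) (p q : ℝ) :
    ∑ T ∈ F.powerset, p ^ T.card * q ^ (F.card - T.card) = (p + q) ^ F.card := by
  have h := Finset.prod_add (fun _ : α => p) (fun _ : α => q) F
  simp only [Finset.prod_const] at h
  rw [h]
  apply Finset.sum_congr rfl
  intro T hT
  rw [Finset.mem_powerset] at hT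
  rw [Finset.card_sdiff_of_subset hT]

/-- Sum over supersets of a fixed set. -/
lemma aux_sum_superset {α : Type*} [DecidableEq α] (F D : Finset α) (hD : D ⊆ F) (p q : ℝ) :
    ∑ T ∈ F.powerset.filter (fun S => D ⊆ S), p ^ T.card * q ^ (F.card - T.card)
      = p ^ D.card * (p + q) ^ (F.card - D.card) := by
  have key : ∑ T ∈ F.powerset.filter (fun S => D ⊆ S), p ^ T.card * q ^ (F.card - T.card)
      = ∑ T ∈ (F \ D).powerset, p ^ (T.card + D.card) * q ^ ((F \ D).card - T.card) := by
    refine Finset.sum_bij' (fun S _ => S \ D) (fun T _ => T ∪ D) ?_ ?_ ?_ ?_ ?_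
    · intro S hS
      rw [Finset.mem_filter, Finset.mem_powerset] at hS
      rw [Finset.mem_powerset]
      exact Finset.sdiff_subset_sdiff hS.1 (le_refl D)
    · intro T hT
      rw [Finset.mem_powerset] at hT
      rw [Finset.mem_filter, Finset.mem_powerset]
      constructor
      · exact Finset.union_subset (hT.trans (Finset.sdiff_subset)) hD
      · exact Finset.subset_union_right
    · intro S hS
      rw [Finset.mem_filter] at hS
      exact Finset.sdiff_union_of_subset hS.2
    · intro T hT
      rw [Finset.mem_powerset] at hT
      show (T ∪ D) \ D = T
      rw [Finset.union_sdiff_right]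
      exact Finset.sdiff_eq_self_of_disjoint (Finset.disjoint_of_subset_left hT sdiff_disjoint)
    · intro S hS
      rw [Finset.mem_filter, Finset.mem_powerset] at hS
      have h1 : (S \ D).card + D.card = S.card := Finset.card_sdiff_add_card_eq_card hS.2
      have h2 : (F \ D).card - (S \ D).card = F.card - S.card := by
        rw [Finset.card_sdiff_of_subset hD, Finset.card_sdiff_of_subset hS.2]
        have := Finset.card_le_card hS.2
        have := Finset.card_le_card hS.1
        omega
      rw [h1, h2]
  rw [key]
  have h2 : ∀ T ∈ (F \ D).powerset,
      p ^ (T.card + D.card) * q ^ ((F \ D).card - T.card)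
        = p ^ D.card * (p ^ T.card * q ^ ((F \ D).card - T.card)) := by
    intro T _; ring
  rw [Finset.sum_congr rfl h2, ← Finset.mul_sum, aux_sum_powerset_pow,
    Finset.card_sdiff_of_subset hD]

/-- Existence of an element at least the weighted average. -/
lemma aux_exists_ge_weighted {α : Type*} (s : Finset α) (w f : α → ℝ)
    (hw0 : ∀ a ∈ s, 0 ≤ w a) (hw1 : ∑ a ∈ s, w a = 1) :
    ∃ a ∈ s, ∑ b ∈ s, w b * f b ≤ f a := by
  by_contra hcon
  push_neg at hcon
  have hpos : ∃ a ∈ s, 0 < w a := by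
    by_contra h
    push_neg at h
    have : ∑ a ∈ s, w a ≤ 0 := Finset.sum_nonpos h
    linarith
  obtain ⟨a, ha, hwa⟩ := hpos
  have hlt : ∑ b ∈ s, w b * f b < ∑ b ∈ s, w b * (∑ b ∈ s, w b * f b) := by
    apply Finset.sum_lt_sum
    · intro i hi
      exact mul_le_mul_of_nonneg_left (hcon i hi).le (hw0 i hi)
    · exact ⟨a, ha, mul_lt_mul_of_pos_left (hcon a ha) hwa⟩
  rw [← Finset.sum_mul, hw1, one_mul] at hlt
  exact lt_irrefl _ hlt

/-- The numeric inequality. -/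
lemma aux_numeric (r m : ℕ) (hr : 2 ≤ r) (hm : 1 ≤ m) :
    (1/4 : ℝ) * (m : ℝ) ^ ((r : ℝ) / (r + 1)) ≤
      ((2/5 : ℝ) * (m : ℝ) ^ (-(1 : ℝ) / (r + 1))) * m
        - (2 * (m : ℝ)) ^ r * ((2/5 : ℝ) * (m : ℝ) ^ (-(1 : ℝ) / (r + 1))) ^ (r * r) := by
  have hM : (1 : ℝ) ≤ (m : ℝ) := by exact_mod_cast hm
  have hM0 : (0 : ℝ) < (m : ℝ) := by linarith
  have hr1 : (0 : ℝ) < (r : ℝ) + 1 := by positivity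
  set e : ℝ := (r : ℝ) / (r + 1) with he
  set X : ℝ := (m : ℝ) ^ e with hX
  have hX0 : 0 < X := Real.rpow_pos_of_pos hM0 e
  have hne : (r:ℝ) + 1 ≠ 0 := by positivity
  have h1 : ((2/5 : ℝ) * (m : ℝ) ^ (-(1 : ℝ) / (r + 1))) * m = (2/5) * X := by
    have ha : (-(1:ℝ)/(r+1)) + 1 = e := by rw [he]; field_simp; ring
    have hkey : (m:ℝ) ^ (-(1:ℝ)/(r+1)) * (m:ℝ) = X := by
      calc (m:ℝ) ^ (-(1:ℝ)/(r+1)) * (m:ℝ)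
          = (m:ℝ) ^ (-(1:ℝ)/(r+1)) * (m:ℝ)^(1:ℝ) := by rw [Real.rpow_one]
        _ = (m:ℝ) ^ ((-(1:ℝ)/(r+1)) + 1) := (Real.rpow_add hM0 _ _).symm
        _ = X := by rw [ha]
    rw [mul_assoc, hkey]
  have h2 : (2 * (m : ℝ)) ^ r * ((2/5 : ℝ) * (m : ℝ) ^ (-(1 : ℝ) / (r + 1))) ^ (r * r)
      = (2:ℝ)^r * (2/5 : ℝ)^(r*r) * X := by
    have hpow : ((m:ℝ) ^ (-(1:ℝ)/(r+1))) ^ (r*r) = (m:ℝ) ^ ((-(1:ℝ)/(r+1)) * ((r*r : ℕ) : ℝ)) := by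
      rw [← Real.rpow_natCast ((m:ℝ) ^ (-(1:ℝ)/(r+1))) (r*r), ← Real.rpow_mul hM0.le]
    have hmr : ((m:ℝ))^r = (m:ℝ) ^ ((r : ℝ)) := (Real.rpow_natCast _ r).symm
    have hcomb : (m:ℝ) ^ ((r:ℝ)) * (m:ℝ) ^ ((-(1:ℝ)/(r+1)) * ((r*r : ℕ) : ℝ)) = X := by
      rw [← Real.rpow_add hM0, hX, he]
      congr 1
      push_cast
      field_simp
      ring
    rw [mul_pow, mul_pow, hpow, hmr]
    calc (2:ℝ)^r * (m:ℝ)^((r:ℝ)) * ((2/5:ℝ)^(r*r) * (m:ℝ)^((-(1:ℝ)/(r+1)) * ((r*r:ℕ):ℝ)))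
        = (2:ℝ)^r * (2/5:ℝ)^(r*r) * ((m:ℝ)^((r:ℝ)) * (m:ℝ)^((-(1:ℝ)/(r+1)) * ((r*r:ℕ):ℝ))) := by
          ring
      _ = _ := by rw [hcomb]
  rw [h1, h2]
  have hC : (2:ℝ)^r * (2/5 : ℝ)^(r*r) ≤ 3/20 := by
    have hb : (2:ℝ)^r * (2/5 : ℝ)^(r*r) = ((2:ℝ) * (2/5)^r) ^ r := by
      rw [mul_pow, ← pow_mul]
    rw [hb]
    have h25 : ((2:ℝ)/5)^r ≤ (2/5 : ℝ)^2 :=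
      pow_le_pow_of_le_one (by norm_num) (by norm_num) hr
    have hbase0 : (0:ℝ) ≤ 2 * (2/5:ℝ)^r := by positivity
    have hbase : (2:ℝ) * (2/5)^r ≤ 8/25 := by nlinarith
    calc ((2:ℝ) * (2/5)^r) ^ r ≤ ((2:ℝ) * (2/5)^r) ^ 2 := by
          apply pow_le_pow_of_le_one hbase0 (by linarith [hbase]) hr
      _ ≤ (8/25:ℝ)^2 := by
          apply pow_le_pow_left₀ hbase0 hbase
      _ ≤ 3/20 := by norm_num
  nlinarith [hX0, hC, mul_le_mul_of_nonneg_right hC hX0.le]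

end Stmt3Aux

/-- For `r ≥ 2`, every graph `G` with `m` edges has a `K_{r,r}`-free (spanning) subgraph
with at least `(1/4) * m^(r/(r+1))` edges. -/
theorem stmt3 {V : Type*} [Fintype V] (G : SimpleGraph V) (r m : ℕ) (hr : 2 ≤ r)
    (hm : G.edgeSet.ncard = m) :
    ∃ H : SimpleGraph V, H ≤ G ∧
      (¬ ∃ A B : Finset V, A.card = r ∧ B.card = r ∧ Disjoint A B ∧
        ∀ a ∈ A, ∀ b ∈ B, H.Adj a b) ∧
      (H.edgeSet.ncard : ℝ) ≥ (1 / 4) * (m : ℝ) ^ ((r : ℝ) / (r + 1)) := by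
  classical
  rcases Nat.eq_zero_or_pos m with hm0 | hmpos
  · subst hm0
    refine ⟨⊥, bot_le, ?_, ?_⟩
    · rintro ⟨A, B, hA, hB, -, hadj⟩
      obtain ⟨a, ha⟩ := Finset.card_pos.mp (show 0 < A.card by omega)
      obtain ⟨b, hb⟩ := Finset.card_pos.mp (show 0 < B.card by omega)
      exact absurd (hadj a ha b hb) (by simp)
    · have hz : ((0:ℕ):ℝ) ^ ((r:ℝ)/(r+1)) = 0 := by
        rw [Nat.cast_zero, Real.zero_rpow]
        have : (0:ℝ) < (r:ℝ)/(r+1) := by positivity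
        linarith
      rw [hz]
      simp
  -- main case
  letI : LinearOrder V := LinearOrder.lift' (Fintype.equivFin V) (Fintype.equivFin V).injective
  set E : Finset (Sym2 V) := G.edgeFinset with hE
  have hEm : E.card = m := by
    rw [← hm, hE, SimpleGraph.edgeFinset, Set.ncard_eq_toFinset_card']
  have hV : Nonempty V := by
    obtain ⟨e, he⟩ := Finset.card_pos.mp (show 0 < E.card by omega)
    exact ⟨(Quot.out e).1⟩
  obtain ⟨v0⟩ := hV
  set cop : Finset (Finset V × Finset V) := Finset.univ.filter
    (fun c => c.1.card = r ∧ c.2.card = r ∧ Disjoint c.1 c.2 ∧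
      ∀ a ∈ c.1, ∀ b ∈ c.2, G.Adj a b) with hcop
  set ced : Finset V × Finset V → Finset (Sym2 V) :=
    fun c => (c.1 ×ˢ c.2).image (fun ab => s(ab.1, ab.2)) with hced
  have hcedE : ∀ c ∈ cop, ced c ⊆ E := by
    intro c hc e he
    simp only [hced, Finset.mem_image, Finset.mem_product] at he
    obtain ⟨⟨a, b⟩, ⟨haA, hbB⟩, rfl⟩ := he
    rw [hE, SimpleGraph.mem_edgeFinset, SimpleGraph.mem_edgeSet]
    rw [hcop, Finset.mem_filter] at hc
    exact hc.2.2.2.2 a haA b hbB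
  have hcedcard : ∀ c ∈ cop, (ced c).card = r * r := by
    intro c hc
    rw [hcop, Finset.mem_filter] at hc
    obtain ⟨-, h1, h2, hdisj, -⟩ := hc
    rw [hced]
    rw [Finset.card_image_of_injOn, Finset.card_product, h1, h2]
    rintro ⟨a, b⟩ hab ⟨a', b'⟩ hab' hee
    simp only [Finset.mem_coe, Finset.mem_product] at hab hab'
    simp only [Sym2.eq, Sym2.rel_iff', Prod.mk.injEq, Prod.swap_prod_mk] at hee
    rcases hee with ⟨rfl, rfl⟩ | ⟨rfl, rfl⟩
    · rfl
    · exact absurd hab'.2 (Finset.disjoint_left.mp hdisj hab.1)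
  set P : Finset (V × V) := Finset.univ.filter (fun ab => G.Adj ab.1 ab.2) with hP
  have hPcard : P.card = 2 * m := by
    have hc1 : Fintype.card G.Dart = P.card := by
      rw [hP, ← Fintype.card_subtype]
      apply Fintype.card_congr
      exact { toFun := fun d => ⟨d.toProd, d.adj⟩
              invFun := fun x => ⟨x.1, x.2⟩
              left_inv := fun d => rfl
              right_inv := fun x => rfl }
    rw [← hc1, SimpleGraph.dart_card_eq_twice_card_edges, ← hE, hEm]
  have hcopcard : cop.card ≤ (2 * m) ^ r := by
    have hkey : cop.card ≤ (Fintype.piFinset fun _ : Fin r => P).card := by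
      apply Finset.card_le_card_of_injOn
        (fun c => fun i : Fin r =>
          ((c.1.sort (· ≤ ·)).getD i v0, (c.2.sort (· ≤ ·)).getD i v0))
      · intro c hc
        simp only [Finset.mem_coe, hcop, Finset.mem_filter] at hc
        obtain ⟨-, h1, h2, -, hadj⟩ := hc
        rw [Finset.mem_coe, Fintype.mem_piFinset]
        intro i
        have hl1 : i < (c.1.sort (· ≤ ·)).length := by
          rw [Finset.length_sort, h1]; exact i.2
        have hl2 : i < (c.2.sort (· ≤ ·)).length := by
          rw [Finset.length_sort, h2]; exact i.2
        beta_reduce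
        rw [List.getD_eq_getElem _ _ hl1, List.getD_eq_getElem _ _ hl2]
        have m1 : (c.1.sort (· ≤ ·))[(i : ℕ)] ∈ c.1 :=
          Finset.mem_sort (· ≤ ·) |>.mp (List.getElem_mem hl1)
        have m2 : (c.2.sort (· ≤ ·))[(i : ℕ)] ∈ c.2 :=
          Finset.mem_sort (· ≤ ·) |>.mp (List.getElem_mem hl2)
        rw [hP, Finset.mem_filter]
        exact ⟨Finset.mem_univ _, hadj _ m1 _ m2⟩
      · intro c hc c' hc' heq
        simp only [Finset.mem_coe] at hc hc'
        simp only [hcop, Finset.mem_filter] at hc hc'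
        obtain ⟨-, h1, h2, -, -⟩ := hc
        obtain ⟨-, h1', h2', -, -⟩ := hc'
        have hlists : ∀ (A A' : Finset V), A.card = r → A'.card = r →
            (∀ i : Fin r, (A.sort (· ≤ ·)).getD i v0 = (A'.sort (· ≤ ·)).getD i v0) →
            A = A' := by
          intro A A' hA hA' hg
          have hlen : (A.sort (· ≤ ·)).length = (A'.sort (· ≤ ·)).length := by
            rw [Finset.length_sort, Finset.length_sort, hA, hA']
          have : A.sort (· ≤ ·) = A'.sort (· ≤ ·) := by
            apply List.ext_getElem hlen
            intro i hi1 hi2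
            have hir : i < r := by rwa [Finset.length_sort, hA] at hi1
            have := hg ⟨i, hir⟩
            rwa [List.getD_eq_getElem _ _ hi1, List.getD_eq_getElem _ _ hi2] at this
          calc A = (A.sort (· ≤ ·)).toFinset := (Finset.sort_toFinset _ _).symm
            _ = (A'.sort (· ≤ ·)).toFinset := by rw [this]
            _ = A' := Finset.sort_toFinset _ _
        have hg1 : ∀ i : Fin r, (c.1.sort (· ≤ ·)).getD i v0 = (c'.1.sort (· ≤ ·)).getD i v0 := by
          intro i; exact congrArg Prod.fst (congrFun heq i)
        have hg2 : ∀ i : Fin r, (c.2.sort (· ≤ ·)).getD i v0 = (c'.2.sort (· ≤ ·)).getD i v0 := by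
          intro i; exact congrArg Prod.snd (congrFun heq i)
        exact Prod.ext (hlists _ _ h1 h1' hg1) (hlists _ _ h2 h2' hg2)
    calc cop.card ≤ (Fintype.piFinset fun _ : Fin r => P).card := hkey
      _ = P.card ^ r := by rw [Fintype.card_piFinset]; simp
      _ = (2 * m) ^ r := by rw [hPcard]
  -- the weighting
  have hM0 : (0:ℝ) < (m:ℝ) := by exact_mod_cast hmpos
  set p : ℝ := (2/5 : ℝ) * (m:ℝ) ^ (-(1:ℝ)/((r:ℝ)+1)) with hpdef
  have hp0 : 0 < p := by
    rw [hpdef]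
    have := Real.rpow_pos_of_pos hM0 (-(1:ℝ)/((r:ℝ)+1))
    positivity
  have hp1 : p ≤ 1 := by
    rw [hpdef]
    have hle : (m:ℝ) ^ (-(1:ℝ)/((r:ℝ)+1)) ≤ 1 := by
      apply Real.rpow_le_one_of_one_le_of_nonpos (by exact_mod_cast hmpos)
      apply div_nonpos_of_nonpos_of_nonneg (by norm_num) (by positivity)
    nlinarith [Real.rpow_pos_of_pos hM0 (-(1:ℝ)/((r:ℝ)+1))]
  set w : Finset (Sym2 V) → ℝ := fun S => p ^ S.card * (1-p) ^ (E.card - S.card) with hwdef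
  have hw0 : ∀ S ∈ E.powerset, 0 ≤ w S := by
    intro S _
    exact mul_nonneg (pow_nonneg hp0.le _) (pow_nonneg (by linarith) _)
  have hw1 : ∑ S ∈ E.powerset, w S = 1 := by
    rw [hwdef]
    have := aux_sum_powerset_pow E p (1-p)
    simpa using this
  have hsize : ∑ S ∈ E.powerset, w S * (S.card : ℝ) = p * m := by
    have hsplit : ∀ S ∈ E.powerset, w S * (S.card:ℝ) = ∑ e ∈ E, (if e ∈ S then w S else 0) := by
      intro S hS
      rw [Finset.sum_ite_mem, Finset.sum_const,
        Finset.inter_eq_right.mpr (Finset.mem_powerset.mp hS), nsmul_eq_mul, mul_comm]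
    rw [Finset.sum_congr rfl hsplit, Finset.sum_comm]
    have hinner : ∀ e ∈ E, ∑ S ∈ E.powerset, (if e ∈ S then w S else 0) = p := by
      intro e he
      rw [← Finset.sum_filter]
      have hfe : E.powerset.filter (fun S => e ∈ S)
          = E.powerset.filter (fun S => {e} ⊆ S) := by
        apply Finset.filter_congr
        intro S _
        simp [Finset.singleton_subset_iff]
      rw [hfe, hwdef]
      have := aux_sum_superset E {e} (Finset.singleton_subset_iff.mpr he) p (1-p)
      simpa using this
    rw [Finset.sum_congr rfl hinner, Finset.sum_const, hEm, nsmul_eq_mul, mul_comm]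
  have hcopsum : ∑ S ∈ E.powerset, w S * ((cop.filter (fun c => ced c ⊆ S)).card : ℝ)
      ≤ (cop.card : ℝ) * p ^ (r*r) := by
    have hsplit : ∀ S ∈ E.powerset, w S * ((cop.filter (fun c => ced c ⊆ S)).card : ℝ)
        = ∑ c ∈ cop, (if ced c ⊆ S then w S else 0) := by
      intro S hS
      rw [← Finset.sum_filter, Finset.sum_const, nsmul_eq_mul, mul_comm]
    rw [Finset.sum_congr rfl hsplit, Finset.sum_comm]
    have hinner : ∀ c ∈ cop, ∑ S ∈ E.powerset, (if ced c ⊆ S then w S else 0) = p ^ (r*r) := by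
      intro c hc
      rw [← Finset.sum_filter, hwdef]
      have := aux_sum_superset E (ced c) (hcedE c hc) p (1-p)
      rw [hcedcard c hc] at this
      simpa using this
    rw [Finset.sum_congr rfl hinner, Finset.sum_const, nsmul_eq_mul]
  -- averaging
  set f : Finset (Sym2 V) → ℝ :=
    fun S => (S.card : ℝ) - ((cop.filter (fun c => ced c ⊆ S)).card : ℝ) with hfdef
  have havg : (1/4 : ℝ) * (m:ℝ) ^ ((r:ℝ)/((r:ℝ)+1)) ≤ ∑ S ∈ E.powerset, w S * f S := by
    have hsum : ∑ S ∈ E.powerset, w S * f S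
        = ∑ S ∈ E.powerset, w S * (S.card : ℝ)
          - ∑ S ∈ E.powerset, w S * ((cop.filter (fun c => ced c ⊆ S)).card : ℝ) := by
      rw [← Finset.sum_sub_distrib]
      apply Finset.sum_congr rfl
      intro S _
      rw [hfdef]
      ring
    rw [hsum, hsize]
    have hnum := aux_numeric r m hr hmpos
    have hcast : ((cop.card : ℝ)) * p ^ (r*r) ≤ (2*(m:ℝ))^r * p^(r*r) := by
      apply mul_le_mul_of_nonneg_right _ (pow_nonneg hp0.le _)
      calc (cop.card : ℝ) ≤ (((2*m)^r : ℕ) : ℝ) := by exact_mod_cast hcopcard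
        _ = (2*(m:ℝ))^r := by push_cast; ring
    have := hcopsum
    rw [hpdef] at *
    linarith [hnum]
  obtain ⟨S, hSmem, hSge⟩ := aux_exists_ge_weighted E.powerset w f hw0 hw1
  have hSval : (1/4 : ℝ) * (m:ℝ) ^ ((r:ℝ)/((r:ℝ)+1)) ≤ f S := le_trans havg hSge
  -- construct the subgraph
  have hSsub : S ⊆ E := Finset.mem_powerset.mp hSmem
  set copsIn := cop.filter (fun c => ced c ⊆ S) with hci
  have hnec : ∀ c ∈ copsIn, (ced c).Nonempty := by
    intro c hc
    rw [hci, Finset.mem_filter] at hc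
    apply Finset.card_pos.mp
    rw [hcedcard c hc.1]
    exact Nat.mul_pos (by omega) (by omega)
  set D : Finset (Sym2 V) := copsIn.attach.image (fun c => (hnec c.1 c.2).choose) with hD
  have hDcard : D.card ≤ copsIn.card := by
    calc D.card ≤ copsIn.attach.card := Finset.card_image_le
      _ = copsIn.card := Finset.card_attach
  set S' : Finset (Sym2 V) := S \ D with hS'
  have hS'sub : (S' : Set (Sym2 V)) ⊆ G.edgeSet := by
    intro e he
    rw [Finset.mem_coe, hS', Finset.mem_sdiff] at he
    have : e ∈ E := hSsub he.1
    rwa [hE, SimpleGraph.mem_edgeFinset] at this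
  refine ⟨SimpleGraph.fromEdgeSet (S' : Set (Sym2 V)), ?_, ?_, ?_⟩
  · calc SimpleGraph.fromEdgeSet (S' : Set (Sym2 V))
        ≤ SimpleGraph.fromEdgeSet G.edgeSet := SimpleGraph.fromEdgeSet_mono hS'sub
      _ = G := SimpleGraph.fromEdgeSet_edgeSet G
  · rintro ⟨A, B, hA, hB, hdisj, hadj⟩
    have hadj' : ∀ a ∈ A, ∀ b ∈ B, s(a, b) ∈ S' := by
      intro a ha b hb
      have := hadj a ha b hb
      rw [SimpleGraph.fromEdgeSet_adj] at this
      exact Finset.mem_coe.mp this.1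
    have hABcop : (A, B) ∈ cop := by
      rw [hcop, Finset.mem_filter]
      refine ⟨Finset.mem_univ _, hA, hB, hdisj, ?_⟩
      intro a ha b hb
      have := hadj' a ha b hb
      have he : s(a, b) ∈ G.edgeSet := hS'sub this
      rwa [SimpleGraph.mem_edgeSet] at he
    have hsub : ced (A, B) ⊆ S' := by
      intro e he
      simp only [hced, Finset.mem_image, Finset.mem_product] at he
      obtain ⟨⟨a, b⟩, ⟨ha, hb⟩, rfl⟩ := he
      exact hadj' a ha b hb
    have hmemIn : (A, B) ∈ copsIn := by
      rw [hci, Finset.mem_filter]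
      exact ⟨hABcop, hsub.trans (by rw [hS']; exact Finset.sdiff_subset)⟩
    have hpick := (hnec _ hmemIn).choose_spec
    have hpickD : (hnec _ hmemIn).choose ∈ D := by
      rw [hD]
      exact Finset.mem_image.mpr ⟨⟨(A, B), hmemIn⟩, Finset.mem_attach _ _, rfl⟩
    have hfin := hsub hpick
    rw [hS', Finset.mem_sdiff] at hfin
    exact hfin.2 hpickD
  · have hedge : (SimpleGraph.fromEdgeSet (S' : Set (Sym2 V))).edgeSet = (S' : Set (Sym2 V)) := by
      rw [SimpleGraph.edgeSet_fromEdgeSet]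
      apply _root_.sdiff_eq_self_iff_disjoint.mpr
      rw [Set.disjoint_left]
      intro e hdiag he
      exact (G.not_isDiag_of_mem_edgeSet (hS'sub he)) hdiag
    rw [ge_iff_le, hedge, Set.ncard_coe_finset]
    have hcardle : S.card ≤ S'.card + copsIn.card := by
      calc S.card ≤ (S \ D).card + D.card := Finset.card_le_card_sdiff_add_card
        _ ≤ S'.card + copsIn.card := by rw [hS']; omega
    have h1 : f S ≤ (S'.card : ℝ) := by
      have hfS : f S = (S.card : ℝ) - (copsIn.card : ℝ) := rfl
      rw [hfS]
      have : (S.card : ℝ) ≤ (S'.card : ℝ) + (copsIn.card : ℝ) := by exact_mod_cast hcardle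
      linarith
    calc (1/4 : ℝ) * (m:ℝ) ^ ((r:ℝ)/((r:ℝ)+1)) ≤ f S := hSval
      _ ≤ (S'.card : ℝ) := h1
end

section
/- Let 2 <= r <= s and let G be the complete bipartite graph with parts U and W where |U| = m^{1/(r+1)} and |W| = m^{r/(r+1)} (assume m^{1/(r+1)} is an integer). Then G has m edges, and every K_{r,s}-free subgraph of G has at most s * m^{r/(r+1)} edges. -/
open Finset

/-- convexity, monotonicity and nonnegativity of `x ↦ ∏_{i<k} (x-i)` on `[c, ∞)`. -/
lemma aux_convex (c : ℝ) : ∀ (k : ℕ), (∀ i : ℕ, i < k → (i : ℝ) ≤ c) →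
    ConvexOn ℝ (Set.Ici c) (fun x : ℝ => ∏ i ∈ range k, (x - i)) ∧
    MonotoneOn (fun x : ℝ => ∏ i ∈ range k, (x - i)) (Set.Ici c) ∧
    ∀ x ∈ Set.Ici c, 0 ≤ ∏ i ∈ range k, (x - i) := by
  intro k
  induction k with
  | zero =>
    intro _
    simp only [range_zero, prod_empty]
    exact ⟨convexOn_const 1 (convex_Ici c), monotoneOn_const, fun x _ => zero_le_one⟩
  | succ k ih =>
    intro h
    obtain ⟨hconv, hmono, hpos⟩ := ih (fun i hi => h i (Nat.lt_succ_of_lt hi))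
    have hkc : (k : ℝ) ≤ c := h k (Nat.lt_succ_self k)
    have hgconv : ConvexOn ℝ (Set.Ici c) (fun x : ℝ => x - k) := by
      refine ⟨convex_Ici c, fun x _ y _ a b _ _ hab => ?_⟩
      show a * x + b * y - k ≤ a * (x - k) + b * (y - k)
      have : a * (x - k) + b * (y - k) = a * x + b * y - (a + b) * k := by ring
      rw [this, hab]; linarith
    have hgmono : MonotoneOn (fun x : ℝ => x - k) (Set.Ici c) :=
      fun a _ b _ hab => by simpa using hab
    have hgpos : ∀ x ∈ Set.Ici c, (0 : ℝ) ≤ x - k := fun x hx => by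
      have : c ≤ x := hx
      linarith
    have key : ConvexOn ℝ (Set.Ici c)
        ((fun x : ℝ => ∏ i ∈ range k, (x - i)) * (fun x : ℝ => x - k)) :=
      hconv.mul hgconv hpos hgpos (hmono.monovaryOn hgmono)
    have heq : ((fun x : ℝ => ∏ i ∈ range k, (x - i)) * (fun x : ℝ => x - k)) =
        (fun x : ℝ => ∏ i ∈ range (k + 1), (x - i)) := by
      funext x; simp [prod_range_succ]
    refine ⟨heq ▸ key, ?_, ?_⟩
    · intro a ha b hb hab
      simp only [prod_range_succ]
      exact mul_le_mul (hmono ha hb hab) (by simpa using hab) (hgpos a ha)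
        (hpos b hb)
    · intro x hx
      rw [prod_range_succ]
      exact mul_nonneg (hpos x hx) (hgpos x hx)

/-- value of the product at `max d (r-1)` equals `r! * (d choose r)`. -/
lemma aux_value (r d : ℕ) (hr : 1 ≤ r) :
    (∏ i ∈ range r, (max (d : ℝ) ((r : ℝ) - 1) - i)) = (r.factorial * d.choose r : ℕ) := by
  rcases lt_or_ge d r with hd | hd
  · have h1 : max (d : ℝ) ((r : ℝ) - 1) = (r : ℝ) - 1 := by
      rw [max_eq_right]
      have : (d : ℝ) ≤ (r : ℝ) - 1 := by
        have : d + 1 ≤ r := hd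
        have := Nat.cast_le (α := ℝ).2 this
        push_cast at this; linarith
      exact this
    rw [h1, Nat.choose_eq_zero_of_lt hd]
    have hmem : r - 1 ∈ range r := mem_range.2 (by omega)
    have hzero : ((r : ℝ) - 1) - ((r - 1 : ℕ) : ℝ) = 0 := by
      rw [Nat.cast_sub hr]; push_cast; ring
    rw [prod_eq_zero hmem hzero]
    simp
  · have h1 : max (d : ℝ) ((r : ℝ) - 1) = (d : ℝ) := by
      rw [max_eq_left]
      have : (r : ℝ) ≤ d := Nat.cast_le.2 hd
      linarith
    rw [h1, ← Nat.descFactorial_eq_factorial_mul_choose]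
    rw [Nat.descFactorial_eq_prod_range]
    push_cast
    refine prod_congr rfl fun i hi => ?_
    rw [Nat.cast_sub (le_trans (Nat.le_of_lt_succ (Nat.lt_succ_of_lt (mem_range.1 hi))) hd)]

/-- Edge count of a subgraph of a complete bipartite graph as a sum of degrees on the right. -/
lemma aux_edges (t n : ℕ) (H : SimpleGraph (Fin t ⊕ Fin n))
    (hH : H ≤ completeBipartiteGraph (Fin t) (Fin n)) [DecidableRel H.Adj] :
    H.edgeSet.ncard =
      ∑ b : Fin n, (univ.filter fun a : Fin t => H.Adj (Sum.inl a) (Sum.inr b)).card := by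
  set P : Finset (Fin t × Fin n) :=
    univ.filter (fun p => H.Adj (Sum.inl p.1) (Sum.inr p.2)) with hP
  have himg : H.edgeSet = ↑(P.image fun p => s(Sum.inl p.1, Sum.inr p.2)) := by
    ext e
    refine Sym2.ind (fun x y => ?_) e
    simp only [SimpleGraph.mem_edgeSet, Finset.coe_image, Set.mem_image, mem_coe, hP,
      mem_filter, mem_univ, true_and]
    constructor
    · intro hadj
      have hcb := hH hadj
      rcases x with a | b <;> rcases y with a' | b'
      · simp [completeBipartiteGraph] at hcb
      · exact ⟨(a, b'), hadj, rfl⟩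
      · exact ⟨(a', b), hadj.symm, Sym2.eq_swap⟩
      · simp [completeBipartiteGraph] at hcb
    · rintro ⟨⟨a, b⟩, hadj, heq⟩
      rw [← SimpleGraph.mem_edgeSet, ← heq]
      exact hadj
  rw [himg, Set.ncard_coe_finset, card_image_of_injective _ ?_]
  · rw [hP, card_filter, Fintype.sum_prod_type_right]
    refine Finset.sum_congr rfl fun b _ => ?_
    rw [card_filter]
  · intro p q h
    simp only [Sym2.eq_iff] at h
    rcases h with ⟨h1, h2⟩ | ⟨h1, h2⟩
    · exact Prod.ext (Sum.inl.inj h1) (Sum.inr.inj h2)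
    · exact absurd h1 (by simp)

/-- The complete bipartite graph with parts of sizes `t = m^(1/(r+1))` and `t^r = m^(r/(r+1))`
has `m = t^(r+1)` edges, and every `K_{r,s}`-free subgraph of it (with the `r`-side in `U`
and the `s`-side in `W`) has at most `s * m^(r/(r+1)) = s * t^r` edges. -/
theorem stmt4 (r s t m : ℕ) (hr : 2 ≤ r) (hrs : r ≤ s) (hm : m = t ^ (r + 1)) :
    (completeBipartiteGraph (Fin t) (Fin (t ^ r))).edgeSet.ncard = m ∧
    ∀ H : SimpleGraph (Fin t ⊕ Fin (t ^ r)),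
      H ≤ completeBipartiteGraph (Fin t) (Fin (t ^ r)) →
      (¬ ∃ (A : Finset (Fin t)) (B : Finset (Fin (t ^ r))),
        A.card = r ∧ B.card = s ∧ ∀ a ∈ A, ∀ b ∈ B, H.Adj (Sum.inl a) (Sum.inr b)) →
      H.edgeSet.ncard ≤ s * t ^ r := by
  classical
  constructor
  · rw [aux_edges t (t ^ r) _ le_rfl]
    have hfull : ∀ b : Fin (t ^ r),
        (univ.filter fun a : Fin t =>
          (completeBipartiteGraph (Fin t) (Fin (t ^ r))).Adj (Sum.inl a) (Sum.inr b)) = univ := by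
      intro b; ext a; simp [completeBipartiteGraph]
    simp only [hfull, card_univ, Fintype.card_fin]
    rw [Finset.sum_const, card_univ, Fintype.card_fin, smul_eq_mul, hm, pow_succ]
  · intro H hH hfree
    set N : Fin (t ^ r) → Finset (Fin t) :=
      fun b => univ.filter fun a => H.Adj (Sum.inl a) (Sum.inr b) with hN
    rw [aux_edges t (t ^ r) H hH]
    by_contra hcon
    push_neg at hcon
    -- hcon : s * t ^ r < ∑ b, (N b).card
    have hn : 0 < t ^ r := by
      by_contra h0
      push_neg at h0
      interval_cases h : t ^ r
      · haveI : IsEmpty (Fin (t ^ r)) := by rw [h]; infer_instance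
        rw [Finset.univ_eq_empty, Finset.sum_empty] at hcon
        omega
    -- key double count
    have step : ∀ b, (N b).card.choose r =
        ((univ.powersetCard r).filter (fun R => R ⊆ N b)).card := by
      intro b
      rw [← card_powersetCard]
      congr 1
      ext R
      simp only [mem_powersetCard, mem_filter, subset_univ, true_and]
      tauto
    have bound : ∀ R ∈ (univ : Finset (Fin t)).powersetCard r,
        (univ.filter fun b => R ⊆ N b).card ≤ s - 1 := by
      intro R hR
      by_contra hc
      push_neg at hc
      have hs : s ≤ (univ.filter fun b => R ⊆ N b).card := by omega
      obtain ⟨B, hBsub, hBcard⟩ := Finset.exists_subset_card_eq hs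
      refine hfree ⟨R, B, (mem_powersetCard.1 hR).2, hBcard, fun a ha b hb => ?_⟩
      have h2 := (mem_filter.1 (hBsub hb)).2 ha
      simpa [hN] using h2
    have key : ∑ b : Fin (t ^ r), (N b).card.choose r ≤ (s - 1) * t.choose r := by
      calc ∑ b : Fin (t ^ r), (N b).card.choose r
          = ∑ b : Fin (t ^ r), ((univ.powersetCard r).filter (fun R => R ⊆ N b)).card := by
            exact Finset.sum_congr rfl fun b _ => step b
        _ = ∑ R ∈ (univ : Finset (Fin t)).powersetCard r,
              (univ.filter fun b => R ⊆ N b).card := by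
            simp only [card_filter]
            rw [Finset.sum_comm]
        _ ≤ ∑ _R ∈ (univ : Finset (Fin t)).powersetCard r, (s - 1) :=
            Finset.sum_le_sum bound
        _ = (s - 1) * t.choose r := by
            rw [Finset.sum_const, smul_eq_mul, card_powersetCard, card_univ,
              Fintype.card_fin, mul_comm]
    have hRHSnat : r.factorial * ∑ b : Fin (t ^ r), (N b).card.choose r ≤ (s - 1) * t ^ r := by
      calc r.factorial * ∑ b : Fin (t ^ r), (N b).card.choose r
          ≤ r.factorial * ((s - 1) * t.choose r) := Nat.mul_le_mul_left _ key
        _ = (s - 1) * (r.factorial * t.choose r) := by ring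
        _ = (s - 1) * t.descFactorial r := by rw [Nat.descFactorial_eq_factorial_mul_choose]
        _ ≤ (s - 1) * t ^ r := Nat.mul_le_mul_left _ (Nat.descFactorial_le_pow t r)
    -- Jensen
    have hc : ∀ i : ℕ, i < r → (i : ℝ) ≤ (r : ℝ) - 1 := by
      intro i hi
      have : (i : ℝ) + 1 ≤ r := by exact_mod_cast hi
      linarith
    obtain ⟨hconv, -, -⟩ := aux_convex ((r : ℝ) - 1) r hc
    set f : ℝ → ℝ := fun x => ∏ i ∈ range r, (x - i) with hf
    set p : Fin (t ^ r) → ℝ := fun b => max ((N b).card : ℝ) ((r : ℝ) - 1) with hp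
    set w : Fin (t ^ r) → ℝ := fun _ => ((t ^ r : ℕ) : ℝ)⁻¹ with hw
    have hcon' : s * t ^ r < ∑ b : Fin (t ^ r), (N b).card := hcon
    have htr : ((t ^ r : ℕ) : ℝ) ≠ 0 := Nat.cast_ne_zero.2 hn.ne'
    have ht0 : 0 < t := by
      rcases Nat.eq_zero_or_pos t with h | h
      · exfalso; rw [h, Nat.zero_pow (by omega : 0 < r)] at hn; omega
      · exact h
    have htr2 : ((t : ℝ)) ^ r ≠ 0 := by positivity
    have hw0 : ∀ b ∈ (univ : Finset (Fin (t ^ r))), 0 ≤ w b := fun b _ => by positivity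
    have hw1 : ∑ b : Fin (t ^ r), w b = 1 := by
      rw [hw, Finset.sum_const, card_univ, Fintype.card_fin, nsmul_eq_mul,
        mul_inv_cancel₀ htr]
    have hmem : ∀ b ∈ (univ : Finset (Fin (t ^ r))), p b ∈ Set.Ici ((r : ℝ) - 1) :=
      fun b _ => Set.mem_Ici.2 (le_max_right _ _)
    have hJ := hconv.map_sum_le hw0 hw1 hmem
    set a : ℝ := ∑ b : Fin (t ^ r), w b • p b with ha
    have hval : ∀ b, f (p b) = ((r.factorial * (N b).card.choose r : ℕ) : ℝ) :=
      fun b => aux_value r _ (by omega)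
    have hRHS : ∑ b : Fin (t ^ r), w b • f (p b) ≤ (s : ℝ) - 1 := by
      calc ∑ b : Fin (t ^ r), w b • f (p b)
          = ∑ b : Fin (t ^ r),
              ((t ^ r : ℕ) : ℝ)⁻¹ * ((r.factorial * (N b).card.choose r : ℕ) : ℝ) :=
            Finset.sum_congr rfl fun b _ => by rw [hval b]; simp [hw, smul_eq_mul]
        _ = ((t ^ r : ℕ) : ℝ)⁻¹ *
              ((r.factorial * ∑ b : Fin (t ^ r), (N b).card.choose r : ℕ) : ℝ) := by
            rw [← Finset.mul_sum]
            congr 1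
            push_cast [Finset.mul_sum]
            ring
        _ ≤ ((t ^ r : ℕ) : ℝ)⁻¹ * (((s - 1) * t ^ r : ℕ) : ℝ) := by
            have := (Nat.cast_le (α := ℝ)).2 hRHSnat
            gcongr
        _ = ((s - 1 : ℕ) : ℝ) := by
            push_cast [htr2]
            field_simp
        _ = (s : ℝ) - 1 := by
            rw [Nat.cast_sub (by omega : 1 ≤ s)]
            push_cast; ring
    have hsa : (s : ℝ) < a := by
      have h1 : ((s : ℝ)) * ((t ^ r : ℕ) : ℝ) < ∑ b : Fin (t ^ r), ((N b).card : ℝ) := by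
        exact_mod_cast hcon'
      have h2 : (∑ b : Fin (t ^ r), ((N b).card : ℝ)) ≤ ∑ b : Fin (t ^ r), p b :=
        Finset.sum_le_sum fun b _ => le_max_left _ _
      have h3 : a = ((t ^ r : ℕ) : ℝ)⁻¹ * ∑ b : Fin (t ^ r), p b := by
        simp only [ha, hw, smul_eq_mul]
        rw [← Finset.mul_sum]
      have htrpos : (0 : ℝ) < ((t ^ r : ℕ) : ℝ) := lt_of_le_of_ne (Nat.cast_nonneg _) (Ne.symm htr)
      rw [h3, inv_mul_eq_div, lt_div_iff₀ htrpos]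
      linarith [h1, h2]
    have hfa : (s : ℝ) < f a := by
      have hprod1 : (1 : ℝ) ≤ ∏ i ∈ range (r - 1), (a - ((i : ℝ) + 1)) := by
        calc (1 : ℝ) = ∏ _i ∈ range (r - 1), (1 : ℝ) := by simp
          _ ≤ ∏ i ∈ range (r - 1), (a - ((i : ℝ) + 1)) := by
              refine Finset.prod_le_prod (fun i _ => zero_le_one) fun i hi => ?_
              have hi' := mem_range.1 hi
              have : (i : ℝ) + 2 ≤ s := by exact_mod_cast (by omega : i + 2 ≤ s)
              linarith
      have hsplit : f a = (∏ i ∈ range (r - 1), (a - ((i : ℝ) + 1))) * a := by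
        simp only [hf]
        have hrr : r = (r - 1) + 1 := by omega
        conv_lhs => rw [hrr]
        rw [Finset.prod_range_succ']
        push_cast
        rw [sub_zero]
      rw [hsplit]
      have hapos : (0 : ℝ) < a := lt_of_le_of_lt (Nat.cast_nonneg s) hsa
      nlinarith [mul_le_mul_of_nonneg_right hprod1 (le_of_lt hapos)]
    linarith [hJ, hRHS, hfa]
end

section
/- Let G' be a bipartite graph with parts U and W that contains no copy of K_{r,s} with r vertices in U and s vertices in W (r <= s). Then sum over w in W of binomial(deg(w), r) is at most (s-1) * binomial(|U|, r). -/
/-- Kővári–Sós–Turán double counting: if a bipartite graph (given by the adjacency relation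
`E` between parts `U` and `W`) has no `K_{r,s}` with the `r`-side in `U` and the `s`-side in
`W`, then `∑_{w ∈ W} C(deg w, r) ≤ (s-1) * C(|U|, r)`. -/
theorem stmt5 {U W : Type*} [Fintype U] [Fintype W] (r s : ℕ) (hrs : r ≤ s) (hs : 1 ≤ s)
    (E : U → W → Prop) [∀ u w, Decidable (E u w)]
    (hfree : ¬ ∃ (R : Finset U) (S : Finset W), R.card = r ∧ S.card = s ∧
      ∀ u ∈ R, ∀ w ∈ S, E u w) :
    ∑ w : W, ((Finset.univ.filter fun u => E u w).card.choose r) ≤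
      (s - 1) * (Fintype.card U).choose r := by
  classical
  have key : ∑ w : W, ((Finset.univ.filter fun u => E u w).card.choose r) =
      ∑ R ∈ (Finset.univ : Finset U).powersetCard r,
        ((Finset.univ.filter fun w : W => ∀ u ∈ R, E u w)).card := by
    have h1 : ∀ w : W, (Finset.univ.filter fun u => E u w).card.choose r =
        ∑ R ∈ (Finset.univ : Finset U).powersetCard r,
          (if ∀ u ∈ R, E u w then 1 else 0) := by
      intro w
      rw [← Finset.card_filter]
      rw [← Finset.card_powersetCard r (Finset.univ.filter fun u => E u w)]
      congr 1
      ext R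
      simp [Finset.mem_powersetCard, Finset.subset_iff]
      tauto
    simp only [h1]
    rw [Finset.sum_comm]
    refine Finset.sum_congr rfl fun R _ => ?_
    rw [← Finset.card_filter]
  rw [key]
  have hcard : ((Finset.univ : Finset U).powersetCard r).card =
      (Fintype.card U).choose r := by
    rw [Finset.card_powersetCard]; rfl
  calc ∑ R ∈ (Finset.univ : Finset U).powersetCard r,
        ((Finset.univ.filter fun w : W => ∀ u ∈ R, E u w)).card
      ≤ ∑ _R ∈ (Finset.univ : Finset U).powersetCard r, (s - 1) := by
        refine Finset.sum_le_sum fun R hR => ?_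
        by_contra h
        push_neg at h
        have hs' : s ≤ (Finset.univ.filter fun w : W => ∀ u ∈ R, E u w).card := by
          omega
        obtain ⟨S, hSsub, hScard⟩ := Finset.exists_subset_card_eq hs'
        exact hfree ⟨R, S, (Finset.mem_powersetCard.mp hR).2, hScard,
          fun u hu w hw => (Finset.mem_filter.mp (hSsub hw)).2 u hu⟩
    _ = (s - 1) * (Fintype.card U).choose r := by
        rw [Finset.sum_const, smul_eq_mul, hcard, mul_comm]
end

section
/- For k, r >= 2 and q = (r^k - 1)/(r - 1), every k-uniform hypergraph G with m edges contains a K^{(k)}_{r,...,r}-free subhypergraph with at least (1/4) * m^{(q-1)/q} edges. -/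
open Finset

section Stmt8Aux

lemma aux_fact_le (k : ℕ) : k.factorial ≤ 2 ^ (k.choose 2) := by
  induction k with
  | zero => simp
  | succ k ih =>
    have h1 : k + 1 ≤ 2 ^ k := (Nat.lt_two_pow_self (n := k))
    calc (k+1).factorial = (k+1) * k.factorial := rfl
      _ ≤ 2 ^ k * 2 ^ (k.choose 2) := Nat.mul_le_mul h1 ih
      _ = 2 ^ (k + k.choose 2) := (pow_add 2 k (k.choose 2)).symm
      _ = 2 ^ ((k+1).choose 2) := by
          rw [Nat.choose_succ_succ, Nat.choose_one_right]

lemma aux_choose_two (k : ℕ) : (k+1).choose 2 + 1 ≤ 2 ^ k := by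
  induction k with
  | zero => simp
  | succ k ih =>
    have h1 : k + 1 ≤ 2 ^ k := (Nat.lt_two_pow_self (n := k))
    have h2 : (k+2).choose 2 = (k+1) + (k+1).choose 2 := by
      rw [Nat.choose_succ_succ, Nat.choose_one_right]
    calc (k+2).choose 2 + 1 = (k+1) + ((k+1).choose 2 + 1) := by omega
      _ ≤ 2 ^ k + 2 ^ k := by omega
      _ = 2 ^ (k+1) := by ring

lemma aux_const_bound {k r : ℕ} (hk : 2 ≤ k) (hr : 2 ≤ r) :
    4 * (k.factorial) ^ r ≤ 2 ^ (r ^ k) := by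
  have h1 : 2 + r * k.choose 2 ≤ r ^ k := by
    obtain ⟨k', rfl⟩ : ∃ k', k = k' + 1 := ⟨k - 1, by omega⟩
    have hc : k'.succ.choose 2 + 1 ≤ 2 ^ k' := aux_choose_two k'
    have h2 : (2:ℕ) ^ k' ≤ r ^ k' := Nat.pow_le_pow_left hr k'
    calc 2 + r * (k'+1).choose 2 ≤ r * ((k'+1).choose 2 + 1) := by nlinarith
      _ ≤ r * 2 ^ k' := Nat.mul_le_mul_left r hc
      _ ≤ r * r ^ k' := Nat.mul_le_mul_left r h2
      _ = r ^ (k'+1) := (pow_succ' r k').symm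
  calc 4 * (k.factorial) ^ r ≤ 4 * (2 ^ (k.choose 2)) ^ r :=
        Nat.mul_le_mul_left 4 (Nat.pow_le_pow_left (aux_fact_le k) r)
    _ = 2 ^ (2 + k.choose 2 * r) := by rw [pow_add, ← pow_mul]; norm_num
    _ ≤ 2 ^ (r ^ k) := Nat.pow_le_pow_right (by norm_num) (by rw [mul_comm]; omega)

lemma aux_sum_w {E : Type*} [DecidableEq E] (p : ℝ) (H : Finset E) :
    ∑ S ∈ H.powerset, p ^ S.card * (1 - p) ^ (H.card - S.card) = 1 := by
  have h := Finset.prod_add (fun _ : E => p) (fun _ : E => 1 - p) H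
  simp only [Finset.prod_const] at h
  have h2 : ∑ S ∈ H.powerset, p ^ S.card * (1 - p) ^ (H.card - S.card)
      = ∑ S ∈ H.powerset, p ^ S.card * (1 - p) ^ ((H \ S).card) := by
    refine Finset.sum_congr rfl fun S hS => ?_
    rw [Finset.card_sdiff_of_subset (Finset.mem_powerset.mp hS)]
  rw [h2, ← h]
  simp

lemma aux_sum_w_cond {E : Type*} [DecidableEq E] (p : ℝ) (H T : Finset E) (hT : T ⊆ H) :
    ∑ S ∈ H.powerset.filter (fun S => T ⊆ S),
        p ^ S.card * (1 - p) ^ (H.card - S.card) = p ^ T.card := by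
  have key : ∑ S ∈ H.powerset.filter (fun S => T ⊆ S),
      p ^ S.card * (1 - p) ^ (H.card - S.card)
      = ∑ U ∈ (H \ T).powerset,
          p ^ T.card * (p ^ U.card * (1 - p) ^ ((H \ T).card - U.card)) := by
    refine Finset.sum_nbij' (fun S => S \ T) (fun U => U ∪ T) ?_ ?_ ?_ ?_ ?_
    · intro S hS
      rw [Finset.mem_filter, Finset.mem_powerset] at hS
      exact Finset.mem_powerset.mpr (Finset.sdiff_subset_sdiff hS.1 le_rfl)
    · intro U hU
      rw [Finset.mem_powerset] at hU
      rw [Finset.mem_filter, Finset.mem_powerset]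
      exact ⟨Finset.union_subset (hU.trans Finset.sdiff_subset) hT,
        Finset.subset_union_right⟩
    · intro S hS
      rw [Finset.mem_filter] at hS
      exact Finset.sdiff_union_of_subset hS.2
    · intro U hU
      rw [Finset.mem_powerset] at hU
      have hd : Disjoint U T := Finset.disjoint_of_subset_left hU (Finset.sdiff_disjoint)
      show (U ∪ T) \ T = U
      rw [Finset.union_sdiff_right, Finset.sdiff_eq_self_iff_disjoint.mpr hd]
    · intro S hS
      rw [Finset.mem_filter, Finset.mem_powerset] at hS
      have h1 : (S \ T).card + T.card = S.card := Finset.card_sdiff_add_card_eq_card hS.2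
      have h2 : (H \ T).card = H.card - T.card := Finset.card_sdiff_of_subset hT
      have h3 : T.card ≤ S.card := Finset.card_le_card hS.2
      have h4 : S.card ≤ H.card := Finset.card_le_card hS.1
      have h5 : H.card - S.card = (H \ T).card - (S \ T).card := by omega
      rw [h5, ← h1, pow_add]
      ring
  rw [key, ← Finset.mul_sum, aux_sum_w p (H \ T), mul_one]

lemma aux_sum_w_card {E : Type*} [DecidableEq E] (p : ℝ) (H : Finset E) :
    ∑ S ∈ H.powerset, (p ^ S.card * (1 - p) ^ (H.card - S.card)) * (S.card : ℝ)
      = p * H.card := by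
  have key : ∀ S ∈ H.powerset,
      (p ^ S.card * (1 - p) ^ (H.card - S.card)) * (S.card : ℝ)
      = ∑ e ∈ H, (p ^ S.card * (1 - p) ^ (H.card - S.card)) *
          (if e ∈ S then (1:ℝ) else 0) := by
    intro S hS
    rw [← Finset.mul_sum]
    congr 1
    rw [Finset.sum_ite_mem, Finset.inter_eq_right.mpr (Finset.mem_powerset.mp hS)]
    simp
  rw [Finset.sum_congr rfl key, Finset.sum_comm]
  have inner : ∀ e ∈ H, ∑ S ∈ H.powerset,
      (p ^ S.card * (1 - p) ^ (H.card - S.card)) * (if e ∈ S then (1:ℝ) else 0) = p := by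
    intro e he
    have : ∀ S ∈ H.powerset,
        (p ^ S.card * (1 - p) ^ (H.card - S.card)) * (if e ∈ S then (1:ℝ) else 0)
        = if {e} ⊆ S then p ^ S.card * (1 - p) ^ (H.card - S.card) else 0 := by
      intro S _
      simp [Finset.singleton_subset_iff, mul_ite]
    rw [Finset.sum_congr rfl this, ← Finset.sum_filter,
      aux_sum_w_cond p H {e} (Finset.singleton_subset_iff.mpr he)]
    simp
  rw [Finset.sum_congr rfl inner, Finset.sum_const, Finset.card_def]
  simp [mul_comm]

lemma aux_sum_w_count {E : Type*} [DecidableEq E] {ι : Type*} [DecidableEq ι]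
    (p : ℝ) (H : Finset E) (𝒜 : Finset ι) (EA : ι → Finset E)
    (hEA : ∀ A ∈ 𝒜, EA A ⊆ H) :
    ∑ S ∈ H.powerset, (p ^ S.card * (1 - p) ^ (H.card - S.card)) *
        ((𝒜.filter (fun A => EA A ⊆ S)).card : ℝ)
      = ∑ A ∈ 𝒜, p ^ (EA A).card := by
  have key : ∀ S ∈ H.powerset,
      (p ^ S.card * (1 - p) ^ (H.card - S.card)) *
        ((𝒜.filter (fun A => EA A ⊆ S)).card : ℝ)
      = ∑ A ∈ 𝒜, (p ^ S.card * (1 - p) ^ (H.card - S.card)) *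
          (if EA A ⊆ S then (1:ℝ) else 0) := by
    intro S _
    rw [← Finset.mul_sum]
    congr 1
    rw [Finset.sum_ite, Finset.sum_const, Finset.sum_const]
    simp
  rw [Finset.sum_congr rfl key, Finset.sum_comm]
  refine Finset.sum_congr rfl fun A hA => ?_
  have : ∀ S ∈ H.powerset,
      (p ^ S.card * (1 - p) ^ (H.card - S.card)) * (if EA A ⊆ S then (1:ℝ) else 0)
      = if EA A ⊆ S then p ^ S.card * (1 - p) ^ (H.card - S.card) else 0 := by
    intro S _
    simp [mul_ite]
  rw [Finset.sum_congr rfl this, ← Finset.sum_filter, aux_sum_w_cond p H (EA A) (hEA A hA)]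

lemma aux_card_perms (k : ℕ) :
    (Finset.univ.filter fun f : Fin k → Fin k => Function.Injective f).card
      = k.factorial := by
  rw [← Fintype.card_subtype]
  rw [Fintype.card_congr (Equiv.subtypeInjectiveEquivEmbedding (Fin k) (Fin k))]
  rw [Fintype.card_embedding_eq]
  simp [Nat.descFactorial_self]

variable {V : Type*} [DecidableEq V]

/-- Edge set of the complete k-partite k-graph with parts `A i`. -/
def auxEdgesOf (k : ℕ) (A : Fin k → Finset V) : Finset (Finset V) :=
  (Fintype.piFinset fun i => A i).image fun f => Finset.univ.image f

open scoped Classical in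
/-- Copies of `K^(k)_{r,…,r}` with vertices among those of `G` and edges in `X`. -/
noncomputable def auxCopies (k r : ℕ) (G X : Finset (Finset V)) :
    Finset (Fin k → Finset V) :=
  (Fintype.piFinset fun _ : Fin k => (G.sup id).powerset).filter
    (fun A => (∀ i, (A i).card = r) ∧ (Pairwise fun i j => Disjoint (A i) (A j)) ∧
      ∀ f : Fin k → V, (∀ i, f i ∈ A i) → Finset.univ.image f ∈ X)

lemma aux_mem_copies {k r : ℕ} (hr : 1 ≤ r) {G X : Finset (Finset V)} (hX : X ⊆ G)
    {A : Fin k → Finset V} (hcard : ∀ i, (A i).card = r)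
    (hdisj : Pairwise fun i j => Disjoint (A i) (A j))
    (hall : ∀ f : Fin k → V, (∀ i, f i ∈ A i) → Finset.univ.image f ∈ X) :
    A ∈ auxCopies k r G G := by
  classical
  have hne : ∀ i, (A i).Nonempty := fun i => Finset.card_pos.mp (by rw [hcard i]; omega)
  rw [auxCopies, Finset.mem_filter]
  refine ⟨?_, hcard, hdisj, fun f hf => hX (hall f hf)⟩
  rw [Fintype.mem_piFinset]
  intro i
  rw [Finset.mem_powerset]
  intro v hv
  set f : Fin k → V := fun i' => if h : i' = i then v else (hne i').choose with hf
  have hfmem : ∀ i', f i' ∈ A i' := by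
    intro i'
    by_cases h : i' = i
    · subst h; simpa [hf] using hv
    · simpa [hf, h] using (hne i').choose_spec
  have hedge : Finset.univ.image f ∈ G := hX (hall f hfmem)
  have hvf : v ∈ Finset.univ.image f := by
    refine Finset.mem_image.mpr ⟨i, Finset.mem_univ i, by simp [hf]⟩
  exact (Finset.le_sup (f := id) hedge : Finset.univ.image f ≤ G.sup id) hvf

lemma aux_edgesOf_subset {k : ℕ} {X : Finset (Finset V)} {A : Fin k → Finset V}
    (hall : ∀ f : Fin k → V, (∀ i, f i ∈ A i) → Finset.univ.image f ∈ X) :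
    auxEdgesOf k A ⊆ X := by
  intro e he
  rw [auxEdgesOf, Finset.mem_image] at he
  obtain ⟨f, hf, rfl⟩ := he
  exact hall f (Fintype.mem_piFinset.mp hf)

lemma aux_card_edgesOf {k r : ℕ} {A : Fin k → Finset V}
    (hcard : ∀ i, (A i).card = r)
    (hdisj : Pairwise fun i j => Disjoint (A i) (A j)) :
    (auxEdgesOf k A).card = r ^ k := by
  rw [auxEdgesOf, Finset.card_image_of_injOn, Fintype.card_piFinset]
  · simp [hcard]
  · intro f hf g hg hfg
    rw [Finset.mem_coe, Fintype.mem_piFinset] at hf hg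
    have hfg' : Finset.image f Finset.univ = Finset.image g Finset.univ := by
      simpa using hfg
    funext i
    have h1 : f i ∈ Finset.image g Finset.univ :=
      hfg' ▸ Finset.mem_image_of_mem f (Finset.mem_univ i)
    obtain ⟨i', _, hi'⟩ := Finset.mem_image.mp h1
    have heq : i' = i := by
      by_contra hne
      exact (Finset.disjoint_left.mp (hdisj hne)) (hi' ▸ hg i') (hf i)
    subst heq
    exact hi'.symm

lemma aux_copies_card {k r : ℕ} (hk : 1 ≤ k) (hr : 1 ≤ r) (G : Finset (Finset V))
    (huniform : ∀ e ∈ G, e.card = k) :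
    (auxCopies k r G G).card ≤ G.card ^ r * (k.factorial) ^ r := by
  classical
  rcases isEmpty_or_nonempty V with hV | hV
  · have : auxCopies k r G G = ∅ := by
      rw [Finset.eq_empty_iff_forall_notMem]
      intro A hA
      rw [auxCopies, Finset.mem_filter] at hA
      have h1 := hA.2.1 ⟨0, by omega⟩
      have : A ⟨0, by omega⟩ = ∅ := Finset.eq_empty_of_isEmpty _
      rw [this] at h1
      simp at h1
      omega
    simp [this]
  inhabit V
  set enum : (Fin k → Finset V) → Fin k → Fin r → V := fun A i j =>
    if h : (j : ℕ) < (A i).card then ((A i).equivFin.symm ⟨j, h⟩ : {x // x ∈ A i}).1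
    else default with henum
  have henum_mem : ∀ (A : Fin k → Finset V), (∀ i, (A i).card = r) →
      ∀ i j, enum A i j ∈ A i := by
    intro A hc i j
    have h : (j : ℕ) < (A i).card := by rw [hc i]; exact j.2
    simp only [henum, dif_pos h]
    exact ((A i).equivFin.symm ⟨j, h⟩).2
  have henum_inj : ∀ (A : Fin k → Finset V), (∀ i, (A i).card = r) →
      ∀ i, Function.Injective (fun j => enum A i j) := by
    intro A hc i j j' hjj'
    have h : (j : ℕ) < (A i).card := by rw [hc i]; exact j.2
    have h' : (j' : ℕ) < (A i).card := by rw [hc i]; exact j'.2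
    simp only [henum, dif_pos h, dif_pos h'] at hjj'
    have h2 := (A i).equivFin.symm.injective (Subtype.coe_injective hjj')
    have h3 := congrArg Fin.val h2
    exact Fin.ext h3
  have hrecover : ∀ (A : Fin k → Finset V), (∀ i, (A i).card = r) →
      ∀ i, Finset.univ.image (fun j => enum A i j) = A i := by
    intro A hc i
    refine Finset.eq_of_subset_of_card_le ?_ ?_
    · intro x hx
      obtain ⟨j, _, rfl⟩ := Finset.mem_image.mp hx
      exact henum_mem A hc i j
    · rw [Finset.card_image_of_injective _ (henum_inj A hc i), hc i]
      simp
  set ρ : Finset V → V → Fin k := fun e x =>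
    if h : x ∈ e ∧ e.card = k then
      ⟨((e).equivFin ⟨x, h.1⟩ : Fin e.card).1, by
        have h3 := ((e).equivFin ⟨x, h.1⟩).2
        omega⟩
    else ⟨0, by omega⟩ with hρ
  set Φ : (Fin k → Finset V) → (Fin r → Finset V) × (Fin r → Fin k → Fin k) :=
    fun A => (fun j => Finset.univ.image (fun i => enum A i j),
      fun j i => ρ (Finset.univ.image (fun i' => enum A i' j)) (enum A i j)) with hΦ
  have hcardT : ((Fintype.piFinset fun _ : Fin r => G) ×ˢ
      (Fintype.piFinset fun _ : Fin r =>
        (Finset.univ.filter fun f : Fin k → Fin k => Function.Injective f))).card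
      = G.card ^ r * (k.factorial) ^ r := by
    rw [Finset.card_product, Fintype.card_piFinset, Fintype.card_piFinset]
    simp [aux_card_perms]
  rw [← hcardT]
  refine Finset.card_le_card_of_injOn Φ ?_ ?_
  · intro A hA
    simp only [Finset.mem_coe, auxCopies, Finset.mem_filter] at hA
    obtain ⟨-, hc, hdisj, hall⟩ := hA
    have hedge : ∀ j, Finset.univ.image (fun i => enum A i j) ∈ G := by
      intro j
      exact hall _ (fun i => henum_mem A hc i j)
    rw [Finset.mem_coe, Finset.mem_product]
    constructor
    · rw [Fintype.mem_piFinset]; exact hedge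
    · rw [Fintype.mem_piFinset]
      intro j
      rw [Finset.mem_filter]
      refine ⟨Finset.mem_univ _, ?_⟩
      intro i i' hii'
      by_contra hne
      have hx : enum A i j ∈ Finset.univ.image (fun i' => enum A i' j) :=
        Finset.mem_image_of_mem _ (Finset.mem_univ i)
      have hx' : enum A i' j ∈ Finset.univ.image (fun i'' => enum A i'' j) :=
        Finset.mem_image_of_mem _ (Finset.mem_univ i')
      have hck : (Finset.univ.image (fun i' => enum A i' j)).card = k :=
        huniform _ (hedge j)
      simp only [hΦ, hρ, dif_pos (And.intro hx hck), dif_pos (And.intro hx' hck)] at hii'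
      have hv0 := congrArg Fin.val hii'
      have hveq : (((Finset.univ.image (fun i' => enum A i' j)).equivFin ⟨enum A i j, hx⟩) : Fin _)
          = ((Finset.univ.image (fun i' => enum A i' j)).equivFin ⟨enum A i' j, hx'⟩) :=
        Fin.ext hv0
      have := (Finset.univ.image (fun i' => enum A i' j)).equivFin.injective hveq
      have heq : enum A i j = enum A i' j := congrArg Subtype.val this
      exact (Finset.disjoint_left.mp (hdisj hne)) (henum_mem A hc i j)
        (heq ▸ henum_mem A hc i' j)
  · intro A hA A' hA' hAA'
    rw [Finset.mem_coe, auxCopies, Finset.mem_filter] at hA hA'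
    obtain ⟨-, hc, hdisj, hall⟩ := hA
    obtain ⟨-, hc', hdisj', hall'⟩ := hA'
    have h1 : ∀ j, Finset.univ.image (fun i => enum A i j)
        = Finset.univ.image (fun i => enum A' i j) := by
      intro j
      exact congrFun (congrArg Prod.fst hAA') j
    have h2 : ∀ j i, ρ (Finset.univ.image (fun i' => enum A i' j)) (enum A i j)
        = ρ (Finset.univ.image (fun i' => enum A' i' j)) (enum A' i j) := by
      intro j i
      have h3 := congrFun (congrArg Prod.snd hAA') j
      exact congrFun h3 i
    have henumeq : ∀ i j, enum A i j = enum A' i j := by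
      intro i j
      set e := Finset.univ.image (fun i' => enum A i' j) with he
      have hx : enum A i j ∈ e := Finset.mem_image_of_mem _ (Finset.mem_univ i)
      have hx' : enum A' i j ∈ e := by
        rw [he, h1 j]; exact Finset.mem_image_of_mem _ (Finset.mem_univ i)
      have hck : e.card = k := huniform _ (hall _ (fun i' => henum_mem A hc i' j))
      have h2' := h2 j i
      rw [← h1 j] at h2'
      simp only [hρ, dif_pos (show enum A i j ∈ Finset.univ.image (fun i' => enum A i' j) ∧
          (Finset.univ.image (fun i' => enum A i' j)).card = k from And.intro hx hck),
        dif_pos (show enum A' i j ∈ Finset.univ.image (fun i' => enum A i' j) ∧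
          (Finset.univ.image (fun i' => enum A i' j)).card = k from And.intro hx' hck)] at h2'
      have hv0 := congrArg Fin.val h2'
      have hveq : (e.equivFin ⟨enum A i j, hx⟩ : Fin _) = e.equivFin ⟨enum A' i j, hx'⟩ :=
        Fin.ext hv0
      exact congrArg Subtype.val (e.equivFin.injective hveq)
    funext i
    rw [← hrecover A hc i, ← hrecover A' hc' i]
    exact Finset.image_congr (fun j _ => henumeq i j)

end Stmt8Aux

/-- For `k, r ≥ 2` and `q = 1 + r + ⋯ + r^(k-1) = (r^k - 1)/(r - 1)`, every `k`-uniform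
hypergraph with `m` edges has a `K^(k)_{r,…,r}`-free subhypergraph with at least
`(1/4) * m^((q-1)/q)` edges. -/
theorem stmt8 {V : Type*} [DecidableEq V] (k r q m : ℕ) (hk : 2 ≤ k) (hr : 2 ≤ r)
    (hq : q = ∑ i ∈ Finset.range k, r ^ i)
    (G : Finset (Finset V)) (huniform : ∀ e ∈ G, e.card = k) (hm : G.card = m) :
    ∃ G' ⊆ G,
      (¬ ∃ A : Fin k → Finset V, (∀ i, (A i).card = r) ∧
        (Pairwise fun i j => Disjoint (A i) (A j)) ∧
        ∀ f : Fin k → V, (∀ i, f i ∈ A i) → Finset.univ.image f ∈ G') ∧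
      ((G'.card : ℝ) ≥ (1 / 4) * (m : ℝ) ^ (((q : ℝ) - 1) / q)) := by
  classical
  subst hm
  have hq3 : 3 ≤ q := by
    rw [hq]
    have h01 : ({0,1} : Finset ℕ) ⊆ Finset.range k := by
      intro x hx
      simp only [Finset.mem_insert, Finset.mem_singleton] at hx
      rcases hx with rfl | rfl <;> simp [Finset.mem_range] <;> omega
    calc 3 ≤ r ^ 0 + r ^ 1 := by simp; omega
      _ = ∑ i ∈ ({0,1} : Finset ℕ), r ^ i := by simp
      _ ≤ ∑ i ∈ Finset.range k, r ^ i :=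
          Finset.sum_le_sum_of_subset h01
  have hqR : (0:ℝ) < q := by exact_mod_cast (by omega : 0 < q)
  have hqne : (q:ℝ) ≠ 0 := ne_of_gt hqR
  have hgeom : ((q:ℝ)) * ((r:ℝ) - 1) = (r:ℝ)^k - 1 := by
    have h := geom_sum_mul (r:ℝ) k
    rw [hq]
    push_cast
    exact h
  set R := r ^ k with hR
  rcases Nat.eq_zero_or_pos G.card with hm0 | hmpos
  · refine ⟨∅, Finset.empty_subset G, ?_, ?_⟩
    · rintro ⟨A, hcard, hdisj, hall⟩
      have hne : ∀ i, (A i).Nonempty := fun i =>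
        Finset.card_pos.mp (by rw [hcard i]; omega)
      have := hall (fun i => (hne i).choose) (fun i => (hne i).choose_spec)
      simp at this
    · have he : (0:ℝ) < ((q:ℝ)-1)/q := by
        apply div_pos _ hqR
        have : (3:ℝ) ≤ q := by exact_mod_cast hq3
        linarith
      rw [hm0]
      simp [Real.zero_rpow (ne_of_gt he)]
  -- main case
  have hM1 : (1:ℝ) ≤ (G.card:ℝ) := by exact_mod_cast hmpos
  have hM0 : (0:ℝ) < (G.card:ℝ) := by linarith
  set M : ℝ := (G.card : ℝ) with hM
  set p : ℝ := (1/2) * M ^ (-(1:ℝ)/q) with hp_def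
  have hrp0 : (0:ℝ) < M ^ (-(1:ℝ)/q) := Real.rpow_pos_of_pos hM0 _
  have hrp1 : M ^ (-(1:ℝ)/q) ≤ 1 :=
    Real.rpow_le_one_of_one_le_of_nonpos hM1
      (by rw [div_nonpos_iff]; right; exact ⟨by norm_num, le_of_lt hqR⟩)
  have hp0 : 0 < p := by rw [hp_def]; positivity
  have hp1 : p ≤ 1/2 := by rw [hp_def]; nlinarith
  set w : Finset (Finset V) → ℝ :=
    fun S => p ^ S.card * (1-p) ^ (G.card - S.card) with hw
  set C := auxCopies k r G G with hC
  have hEcardA : ∀ A ∈ C, (auxEdgesOf k A).card = R ∧ auxEdgesOf k A ⊆ G := by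
    intro A hA
    rw [hC, auxCopies, Finset.mem_filter] at hA
    exact ⟨aux_card_edgesOf hA.2.1 hA.2.2.1, aux_edgesOf_subset hA.2.2.2⟩
  have hsum_cnt : ∑ S ∈ G.powerset,
      w S * (((C.filter (fun A => auxEdgesOf k A ⊆ S)).card : ℕ) : ℝ)
      = (C.card : ℝ) * p ^ R := by
    rw [aux_sum_w_count p G C (auxEdgesOf k) (fun A hA => (hEcardA A hA).2)]
    rw [Finset.sum_congr rfl (fun A hA => by rw [(hEcardA A hA).1])]
    rw [Finset.sum_const, nsmul_eq_mul]
  have hsum_card : ∑ S ∈ G.powerset, w S * ((S.card:ℕ):ℝ) = p * M :=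
    aux_sum_w_card p G
  have hsum1 : ∑ S ∈ G.powerset, w S = 1 := aux_sum_w p G
  have hN : (C.card : ℝ) ≤ M ^ r * ((k.factorial : ℝ)) ^ r := by
    have h := aux_copies_card (k := k) (r := r) (by omega) (by omega) G huniform
    calc (C.card:ℝ) ≤ ((G.card ^ r * k.factorial ^ r : ℕ) : ℝ) := by exact_mod_cast h
      _ = M ^ r * (k.factorial:ℝ) ^ r := by push_cast; ring
  -- exponent identities
  have hkey1 : M ^ (((q:ℝ)-1)/q) = M ^ (-(1:ℝ)/q) * M := by
    rw [show ((q:ℝ)-1)/q = (-(1:ℝ)/q) + 1 by field_simp; ring,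
      Real.rpow_add hM0, Real.rpow_one]
  have hkey2 : (M ^ (r:ℕ)) * (M ^ (-(1:ℝ)/q)) ^ (R:ℕ) = M ^ (((q:ℝ)-1)/q) := by
    rw [← Real.rpow_natCast M r, ← Real.rpow_natCast (M ^ (-(1:ℝ)/q)) R,
      ← Real.rpow_mul (le_of_lt hM0), ← Real.rpow_add hM0]
    congr 1
    have hRq : ((R:ℕ):ℝ) = (r:ℝ)^k := by rw [hR]; push_cast; ring
    rw [hRq]
    field_simp
    linarith [hgeom]
  have hconst : (k.factorial:ℝ)^r * (1/2:ℝ)^R ≤ 1/4 := by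
    have h4 : (4 * k.factorial ^ r : ℕ) ≤ 2 ^ R := aux_const_bound hk hr
    have h4' : (4:ℝ) * (k.factorial:ℝ)^r ≤ 2^R := by exact_mod_cast h4
    have h2R : (0:ℝ) < 2^R := by positivity
    have hhalf : ((1:ℝ)/2)^R = 1/2^R := by rw [div_pow, one_pow]
    rw [hhalf]
    rw [mul_one_div, div_le_div_iff₀ h2R (by norm_num)]
    linarith
  have hMe0 : (0:ℝ) < M ^ (((q:ℝ)-1)/q) := Real.rpow_pos_of_pos hM0 _
  have hpR0 : (0:ℝ) ≤ p ^ R := by positivity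
  set t : ℝ := (1/4) * M ^ (((q:ℝ)-1)/q) with ht
  have hB : t ≤ p * M - (C.card:ℝ) * p ^ R := by
    have e1 : p * M = (1/2) * M ^ (((q:ℝ)-1)/q) := by
      rw [hp_def, mul_assoc, ← hkey1]
    have e2 : (C.card:ℝ) * p ^ R ≤ (k.factorial:ℝ)^r * (1/2:ℝ)^R * M ^ (((q:ℝ)-1)/q) := by
      calc (C.card:ℝ) * p ^ R ≤ (M^r * (k.factorial:ℝ)^r) * p ^ R :=
            mul_le_mul_of_nonneg_right hN hpR0
        _ = (k.factorial:ℝ)^r * (1/2:ℝ)^R * ((M ^ r) * (M ^ (-(1:ℝ)/q)) ^ R) := by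
            rw [hp_def, mul_pow]; ring
        _ = (k.factorial:ℝ)^r * (1/2:ℝ)^R * M ^ (((q:ℝ)-1)/q) := by rw [hkey2]
    have e3 : (k.factorial:ℝ)^r * (1/2:ℝ)^R * M ^ (((q:ℝ)-1)/q)
        ≤ (1/4) * M ^ (((q:ℝ)-1)/q) :=
      mul_le_mul_of_nonneg_right hconst (le_of_lt hMe0)
    rw [ht, e1]
    linarith
  have hwpos : ∀ S ∈ G.powerset, 0 < w S := by
    intro S hS
    rw [hw]
    have h1 : (0:ℝ) < 1 - p := by linarith
    positivity
  obtain ⟨S, hSmem, hSgood⟩ : ∃ S ∈ G.powerset,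
      t ≤ ((S.card:ℕ):ℝ) - (((C.filter (fun A => auxEdgesOf k A ⊆ S)).card : ℕ):ℝ) := by
    by_contra hcon
    push_neg at hcon
    have hlt : ∑ S ∈ G.powerset, w S * (((S.card:ℕ):ℝ)
        - (((C.filter (fun A => auxEdgesOf k A ⊆ S)).card:ℕ):ℝ))
        < ∑ S ∈ G.powerset, w S * t := by
      apply Finset.sum_lt_sum_of_nonempty ⟨∅, Finset.empty_mem_powerset G⟩
      intro S hS
      exact mul_lt_mul_of_pos_left (hcon S hS) (hwpos S hS)
    have hL : ∑ S ∈ G.powerset, w S * (((S.card:ℕ):ℝ)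
        - (((C.filter (fun A => auxEdgesOf k A ⊆ S)).card:ℕ):ℝ))
        = p * M - (C.card:ℝ) * p ^ R := by
      rw [Finset.sum_congr rfl (fun S _ => mul_sub (w S) _ _),
        Finset.sum_sub_distrib, hsum_card, hsum_cnt]
    have hRt : ∑ S ∈ G.powerset, w S * t = t := by
      rw [← Finset.sum_mul, hsum1, one_mul]
    rw [hL, hRt] at hlt
    linarith
  have hSsub : S ⊆ G := Finset.mem_powerset.mp hSmem
  set F := C.filter (fun A => auxEdgesOf k A ⊆ S) with hF
  set del := F.image (fun A => if h : ∀ i, (A i).Nonempty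
      then Finset.univ.image (fun i => (h i).choose) else ∅) with hdel
  refine ⟨S \ del, Finset.Subset.trans Finset.sdiff_subset hSsub, ?_, ?_⟩
  · rintro ⟨A, hcard, hdisj, hall⟩
    have hsub' : S \ del ⊆ G := Finset.Subset.trans Finset.sdiff_subset hSsub
    have hCmem : A ∈ C := aux_mem_copies (by omega) hsub' hcard hdisj hall
    have hFA : A ∈ F := by
      rw [hF, Finset.mem_filter]
      exact ⟨hCmem, Finset.Subset.trans (aux_edgesOf_subset hall) Finset.sdiff_subset⟩
    have hne : ∀ i, (A i).Nonempty := fun i =>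
      Finset.card_pos.mp (by rw [hcard i]; omega)
    have hchosen_del : Finset.univ.image (fun i => (hne i).choose) ∈ del := by
      rw [hdel, Finset.mem_image]
      exact ⟨A, hFA, by rw [dif_pos hne]⟩
    have hchosen_mem : Finset.univ.image (fun i => (hne i).choose) ∈ S \ del :=
      hall _ (fun i => (hne i).choose_spec)
    exact (Finset.mem_sdiff.mp hchosen_mem).2 hchosen_del
  · have h1 : del.card ≤ F.card := Finset.card_image_le
    have h2 : S.card - del.card ≤ (S \ del).card := Finset.le_card_sdiff del S
    have hnat : S.card ≤ (S \ del).card + del.card := by omega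
    have hcast : ((S.card:ℕ):ℝ) ≤ (((S \ del).card:ℕ):ℝ) + ((del.card:ℕ):ℝ) := by
      exact_mod_cast hnat
    have hdelF : ((del.card:ℕ):ℝ) ≤ ((F.card:ℕ):ℝ) := by exact_mod_cast h1
    rw [ge_iff_le]
    have : (1/4 : ℝ) * M ^ (((q:ℝ)-1)/q) = t := ht.symm
    calc (1/4 : ℝ) * (G.card:ℝ) ^ (((q:ℝ)-1)/q) = t := ht.symm
      _ ≤ (((S \ del).card:ℕ):ℝ) := by
          rw [hF] at hSgood
          linarith
end

section
/- Let r >= 1 and let G be a k-partite k-uniform hypergraph with parts U_1,...,U_k where |U_i| = n^{r^i}, having exactly a * (|U_2| * |U_3| * ... * |U_k|) edges for some real a >= r. Then G contains at least binomial(a, r) * product over i from 1 to k-1 of binomial(|U_i|, r) copies of K^{(k)}_{r,...,r}. -/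
open Finset


/-- Generalized binomial coefficient `C(a, r)` for real `a`. -/
noncomputable def rchoose (a : ℝ) (r : ℕ) : ℝ :=
  (∏ i ∈ Finset.range r, (a - i)) / (r.factorial : ℝ)

/-- truncated binomial -/
noncomputable def g0 (r : ℕ) (x : ℝ) : ℝ := rchoose (max x ((r : ℝ) - 1)) r

lemma prod_sub_nonneg {r j : ℕ} (hj : j ≤ r) {x : ℝ} (hx : (r : ℝ) - 1 ≤ x) :
    0 ≤ ∏ i ∈ range j, (x - i) := by
  apply Finset.prod_nonneg
  intro i hi
  rw [mem_range] at hi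
  have : (i : ℝ) ≤ (r : ℝ) - 1 := by
    have : (i : ℝ) + 1 ≤ (j : ℝ) := by exact_mod_cast hi
    have h2 : (j : ℝ) ≤ r := by exact_mod_cast hj
    linarith
  linarith

lemma prod_sub_monotoneOn {r j : ℕ} (hj : j ≤ r) :
    MonotoneOn (fun x : ℝ => ∏ i ∈ range j, (x - i)) (Set.Ici ((r : ℝ) - 1)) := by
  intro x hx y hy hxy
  simp only [Set.mem_Ici] at hx hy
  apply Finset.prod_le_prod
  · intro i hi
    rw [mem_range] at hi
    have : (i : ℝ) + 1 ≤ (j : ℝ) := by exact_mod_cast hi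
    have h2 : (j : ℝ) ≤ r := by exact_mod_cast hj
    linarith
  · intro i _; linarith

lemma prod_sub_convexOn {r : ℕ} : ∀ {j : ℕ}, j ≤ r →
    ConvexOn ℝ (Set.Ici ((r : ℝ) - 1)) (fun x : ℝ => ∏ i ∈ range j, (x - i)) := by
  intro j
  induction j with
  | zero => intro _; simpa using convexOn_const 1 (convex_Ici _)
  | succ j ih =>
    intro hj
    have hj' : j ≤ r := Nat.le_of_succ_le hj
    have h1 : ConvexOn ℝ (Set.Ici ((r : ℝ) - 1)) (fun x : ℝ => x - j) :=
      ⟨convex_Ici _, fun x _ y _ a b _ _ hab => by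
        simp only [smul_eq_mul]
        apply le_of_eq; nlinarith [hab]⟩
    have h1m : MonotoneOn (fun x : ℝ => x - j) (Set.Ici ((r : ℝ) - 1)) := by
      intro x _ y _ hxy; simpa using hxy
    have hmul := (ih hj').mul h1 (fun x hx => prod_sub_nonneg hj' hx)
      (fun x hx => by
        have hx' : (r : ℝ) - 1 ≤ x := hx
        have : (j : ℝ) + 1 ≤ (r : ℝ) := by exact_mod_cast hj
        show (0:ℝ) ≤ x - j
        linarith)
      ((prod_sub_monotoneOn hj').monovaryOn h1m)
    have : (fun x : ℝ => ∏ i ∈ range (j+1), (x - i)) =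
        (fun x : ℝ => ∏ i ∈ range j, (x - i)) * (fun x : ℝ => x - j) := by
      funext x; simp [Finset.prod_range_succ]
    rw [this]; exact hmul

lemma rchoose_nonneg {r : ℕ} {x : ℝ} (hx : (r : ℝ) - 1 ≤ x) : 0 ≤ rchoose x r := by
  unfold rchoose
  apply div_nonneg (prod_sub_nonneg le_rfl hx)
  positivity

lemma rchoose_monotoneOn {r : ℕ} : MonotoneOn (fun x => rchoose x r) (Set.Ici ((r : ℝ) - 1)) := by
  intro x hx y hy hxy
  unfold rchoose
  have h := prod_sub_monotoneOn (r := r) le_rfl hx hy hxy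
  exact div_le_div_of_nonneg_right h (by positivity)

lemma rchoose_convexOn {r : ℕ} : ConvexOn ℝ (Set.Ici ((r : ℝ) - 1)) (fun x => rchoose x r) := by
  unfold rchoose
  have := (prod_sub_convexOn (r := r) le_rfl).smul
      (c := ((r.factorial : ℝ))⁻¹) (by positivity)
  simpa [div_eq_inv_mul, smul_eq_mul] using this

/-- `rchoose` agrees with `Nat.choose` on the naturals. -/
lemma rchoose_natCast (d r : ℕ) : rchoose (d : ℝ) r = (d.choose r : ℝ) := by
  rcases lt_or_ge d r with h | h
  · have : rchoose (d : ℝ) r = 0 := by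
      unfold rchoose
      rw [Finset.prod_eq_zero (Finset.mem_range.2 h) (by simp)]
      simp
    rw [this, Nat.choose_eq_zero_of_lt h, Nat.cast_zero]
  · unfold rchoose
    have hp : ∏ i ∈ range r, ((d : ℝ) - i) = (d.descFactorial r : ℝ) := by
      rw [Nat.descFactorial_eq_prod_range, Nat.cast_prod]
      apply Finset.prod_congr rfl
      intro i hi
      rw [mem_range] at hi
      rw [Nat.cast_sub (le_trans hi.le h)]
    rw [hp, Nat.descFactorial_eq_factorial_mul_choose, Nat.cast_mul, mul_comm,
      mul_div_assoc, div_self (by positivity), mul_one]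

lemma g0_eq {r : ℕ} {x : ℝ} (hx : (r : ℝ) - 1 ≤ x) : g0 r x = rchoose x r := by
  unfold g0; rw [max_eq_left hx]

lemma g0_nonneg (r : ℕ) (x : ℝ) : 0 ≤ g0 r x :=
  rchoose_nonneg (le_max_right _ _)

lemma g0_monotone (r : ℕ) : Monotone (g0 r) := by
  intro x y hxy
  exact rchoose_monotoneOn (Set.mem_Ici.2 (le_max_right _ _)) (Set.mem_Ici.2 (le_max_right _ _))
    (max_le_max hxy le_rfl)

lemma g0_convexOn (r : ℕ) : ConvexOn ℝ Set.univ (g0 r) := by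
  constructor
  · exact convex_univ
  · intro x _ y _ a b ha hb hab
    have hmax : max (a • x + b • y) ((r:ℝ)-1) ≤ a • max x ((r:ℝ)-1) + b • max y ((r:ℝ)-1) := by
      apply max_le
      · apply add_le_add
        · exact smul_le_smul_of_nonneg_left (le_max_left _ _) ha
        · exact smul_le_smul_of_nonneg_left (le_max_left _ _) hb
      · calc (r:ℝ) - 1 = a • ((r:ℝ)-1) + b • ((r:ℝ)-1) := by
              simp only [smul_eq_mul]; nlinarith [hab]
          _ ≤ _ := by
              apply add_le_add
              · exact smul_le_smul_of_nonneg_left (le_max_right _ _) ha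
              · exact smul_le_smul_of_nonneg_left (le_max_right _ _) hb
    have h1 : g0 r (a • x + b • y) ≤ rchoose (a • max x ((r:ℝ)-1) + b • max y ((r:ℝ)-1)) r := by
      unfold g0
      apply rchoose_monotoneOn (Set.mem_Ici.2 (le_max_right _ _)) ?_ hmax
      have h2 : (r:ℝ) - 1 ≤ a • max x ((r:ℝ)-1) + b • max y ((r:ℝ)-1) :=
        le_trans (le_max_right _ _) hmax
      exact h2
    refine h1.trans ?_
    exact rchoose_convexOn.2 (Set.mem_Ici.2 (le_max_right _ _))
      (Set.mem_Ici.2 (le_max_right _ _)) ha hb hab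

lemma g0_natCast (r d : ℕ) : g0 r (d : ℝ) = (d.choose r : ℝ) := by
  rcases le_or_gt ((r:ℝ) - 1) (d : ℝ) with h | h
  · rw [g0_eq h, rchoose_natCast]
  · have hd : d < r := by
      by_contra hcon
      push_neg at hcon
      have : (r : ℝ) ≤ (d : ℝ) := by exact_mod_cast hcon
      linarith
    have hr1 : 1 ≤ r := by
      by_contra hcon
      push_neg at hcon
      interval_cases r
      · simp at h; linarith [Nat.cast_nonneg (α := ℝ) d]
    unfold g0 rchoose
    rw [max_eq_right h.le, Nat.choose_eq_zero_of_lt hd, Nat.cast_zero,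
      Finset.prod_eq_zero (i := r - 1) (Finset.mem_range.2 (by omega)) (by
        rw [Nat.cast_sub (by omega)]; push_cast; ring)]
    simp

lemma convexOn_comp_mono {f g : ℝ → ℝ} (hg : ConvexOn ℝ Set.univ g) (hgm : Monotone g)
    (hf : ConvexOn ℝ Set.univ f) : ConvexOn ℝ Set.univ (fun x => g (f x)) :=
  ⟨convex_univ, fun x _ y _ a b ha hb hab =>
    le_trans (hgm (hf.2 trivial trivial ha hb hab))
      (hg.2 trivial trivial ha hb hab)⟩

lemma convexOn_comp_div {φ : ℝ → ℝ} (hφ : ConvexOn ℝ Set.univ φ) (M : ℝ) :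
    ConvexOn ℝ Set.univ (fun x => φ (x / M)) := by
  refine ⟨convex_univ, fun x _ y _ a b ha hb hab => ?_⟩
  have h := hφ.2 (Set.mem_univ (x / M)) (Set.mem_univ (y / M)) ha hb hab
  have heq : (a • x + b • y) / M = a • (x / M) + b • (y / M) := by
    simp only [smul_eq_mul]; ring
  show φ ((a • x + b • y) / M) ≤ a • φ (x / M) + b • φ (y / M)
  rw [heq]; exact h

/-- Jensen, averaged form. -/
lemma jensen_card {ι : Type*} (s : Finset ι) (p : ι → ℝ) {φ : ℝ → ℝ}
    (hφ : ConvexOn ℝ Set.univ φ) :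
    (s.card : ℝ) * φ ((∑ i ∈ s, p i) / s.card) ≤ ∑ i ∈ s, φ (p i) := by
  rcases Finset.eq_empty_or_nonempty s with rfl | hs
  · simp
  · have hc : (0:ℝ) < s.card := by exact_mod_cast hs.card_pos
    have h := hφ.map_sum_le (t := s) (w := fun _ => (s.card : ℝ)⁻¹) (p := p)
      (fun i _ => by positivity)
      (by rw [Finset.sum_const, nsmul_eq_mul, mul_inv_cancel₀ hc.ne'])
      (fun i _ => Set.mem_univ _)
    simp only [smul_eq_mul] at h
    rw [← Finset.mul_sum, ← Finset.mul_sum] at h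
    have h2 : φ ((s.card : ℝ)⁻¹ * ∑ i ∈ s, p i) ≤ (s.card : ℝ)⁻¹ * ∑ i ∈ s, φ (p i) := h
    calc (s.card : ℝ) * φ ((∑ i ∈ s, p i) / s.card)
        = (s.card : ℝ) * φ ((s.card : ℝ)⁻¹ * ∑ i ∈ s, p i) := by rw [div_eq_inv_mul]
      _ ≤ (s.card : ℝ) * ((s.card : ℝ)⁻¹ * ∑ i ∈ s, φ (p i)) :=
          mul_le_mul_of_nonneg_left h2 hc.le
      _ = ∑ i ∈ s, φ (p i) := by field_simp

/-- The recursive lower-bound function. -/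
noncomputable def Psi (r : ℕ) : (k : ℕ) → (Fin (k + 1) → ℕ) → ℝ → ℝ
  | 0, _, e => g0 r e
  | (k + 1), N, e =>
      ((N 0).choose r : ℝ) *
        Psi r k (fun i => N i.succ)
          ((∏ i : Fin (k + 1), (N i.succ : ℝ)) * g0 r (e / ∏ i : Fin (k + 1), (N i.succ : ℝ)) /
            ((N 0).choose r : ℝ))

lemma Psi_props (r : ℕ) : ∀ (k : ℕ) (N : Fin (k + 1) → ℕ),
    Monotone (Psi r k N) ∧ ConvexOn ℝ Set.univ (Psi r k N) ∧ ∀ e, 0 ≤ Psi r k N e := by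
  intro k
  induction k with
  | zero => exact fun N => ⟨g0_monotone r, g0_convexOn r, g0_nonneg r⟩
  | succ k ih =>
    intro N
    obtain ⟨ihm, ihc, ihn⟩ := ih (fun i => N i.succ)
    set c : ℝ := ((N 0).choose r : ℝ) with hc
    set M : ℝ := ∏ i : Fin (k + 1), (N i.succ : ℝ) with hM
    have hc0 : 0 ≤ c := by positivity
    have hM0 : 0 ≤ M := by positivity
    have hinner_mono : Monotone (fun e : ℝ => M * g0 r (e / M) / c) := by
      rcases eq_or_lt_of_le hM0 with hM' | hM'
    -- M = 0 : constant
      · intro x y _; rw [← hM']; simp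
      · intro x y hxy
        have : g0 r (x / M) ≤ g0 r (y / M) :=
          g0_monotone r (div_le_div_of_nonneg_right hxy hM0)
        apply div_le_div_of_nonneg_right ?_ hc0
        exact mul_le_mul_of_nonneg_left this hM0
    have hinner_convex : ConvexOn ℝ Set.univ (fun e : ℝ => M * g0 r (e / M) / c) := by
      have h1 : ConvexOn ℝ Set.univ (fun e : ℝ => g0 r (e / M)) :=
        convexOn_comp_div (g0_convexOn r) M
      have h2 := h1.smul (c := M / c) (div_nonneg hM0 hc0)
      have heq : (fun e : ℝ => M * g0 r (e / M) / c) =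
          (fun e : ℝ => (M / c) • g0 r (e / M)) := by
        funext e; simp only [smul_eq_mul]; ring
      rw [heq]; exact h2
    refine ⟨?_, ?_, ?_⟩
    · intro x y hxy
      show c * _ ≤ c * _
      exact mul_le_mul_of_nonneg_left (ihm (hinner_mono hxy)) hc0
    · have h3 : ConvexOn ℝ Set.univ (fun e : ℝ => Psi r k (fun i => N i.succ)
          (M * g0 r (e / M) / c)) :=
        convexOn_comp_mono ihc ihm hinner_convex
      have h4 := h3.smul (c := c) hc0
      have heq : (Psi r (k+1) N) = fun e : ℝ => c • Psi r k (fun i => N i.succ)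
          (M * g0 r (e / M) / c) := by
        funext e; simp only [smul_eq_mul]; rfl
      rw [heq]; exact h4
    · intro e
      exact mul_nonneg hc0 (ihn _)
lemma self_le_prod_sub {r : ℕ} (hr : 1 ≤ r) {a : ℝ} (ha : (r : ℝ) ≤ a) :
    a ≤ ∏ i ∈ range r, (a - i) := by
  obtain ⟨m, rfl⟩ := Nat.exists_eq_add_of_le hr
  rw [Nat.add_comm 1 m] at *
  rw [Finset.prod_range_succ']
  have h1 : (1:ℝ) ≤ ∏ i ∈ range m, (a - ((i + 1 : ℕ) : ℝ)) := by
    calc (1:ℝ) = ∏ _i ∈ range m, (1:ℝ) := by simp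
      _ ≤ _ := ?_
    apply Finset.prod_le_prod (fun i _ => zero_le_one)
    intro i hi
    rw [mem_range] at hi
    have h2 : ((i:ℝ) + 2) ≤ ((1 + m : ℕ) : ℝ) := by
      push_cast
      have : (i : ℝ) + 1 ≤ (m : ℝ) := by exact_mod_cast hi
      linarith
    have ha' : (m:ℝ) + 1 ≤ a := by exact_mod_cast ha
    push_cast
    push_cast at h2
    linarith
  have h0 : (0:ℝ) ≤ a := le_trans (by positivity) ha
  calc a = 1 * a := (one_mul a).symm
    _ ≤ (∏ i ∈ range m, (a - ((i + 1 : ℕ) : ℝ))) * (a - (0:ℕ)) := by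
        rw [Nat.cast_zero, sub_zero]
        exact mul_le_mul_of_nonneg_right h1 h0
    _ = _ := rfl

lemma factorial_mul_rchoose {r : ℕ} (a : ℝ) :
    (r.factorial : ℝ) * rchoose a r = ∏ i ∈ range r, (a - i) := by
  unfold rchoose
  rw [mul_div_cancel₀]
  positivity

lemma psi_lower (r : ℕ) (hr : 1 ≤ r) :
    ∀ (k n : ℕ) (a : ℝ), (r : ℝ) ≤ a →
    rchoose a r * ∏ i : Fin k, (((n ^ r ^ ((i : ℕ) + 1)).choose r : ℕ) : ℝ) ≤
      Psi r k (fun i => n ^ r ^ ((i : ℕ) + 1))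
        (a * ∏ i : Fin k, ((n : ℝ) ^ r ^ ((i : ℕ) + 2))) := by
  intro k
  induction k with
  | zero =>
    intro n a ha
    have ha' : (r : ℝ) - 1 ≤ a := by linarith
    show rchoose a r * 1 ≤ g0 r (a * 1)
    rw [mul_one, mul_one, g0_eq ha']
  | succ k ih =>
    intro n a ha
    have ha1 : (r : ℝ) - 1 ≤ a := by linarith
    have hrch : 0 ≤ rchoose a r := rchoose_nonneg ha1
    set N : Fin (k + 2) → ℕ := fun i => n ^ r ^ ((i : ℕ) + 1) with hN
    set c : ℝ := ((N 0).choose r : ℝ) with hc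
    set M : ℝ := ∏ i : Fin (k + 1), (N i.succ : ℝ) with hM
    set EE : ℝ := a * ∏ i : Fin (k+1), ((n : ℝ) ^ r ^ ((i : ℕ) + 2)) with hEE
    have hPsiEq : Psi r (k+1) N EE = c * Psi r k (fun i => N i.succ) (M * g0 r (EE / M) / c) := rfl
    set P1 : ℝ := ∏ i : Fin (k+1), (((n ^ r ^ ((i : ℕ) + 1)).choose r : ℕ) : ℝ) with hP1
    set P2 : ℝ := ∏ i : Fin k, ((((n ^ r) ^ r ^ ((i : ℕ) + 1)).choose r : ℕ) : ℝ) with hP2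
    have hsplit : P1 = c * P2 := by
      rw [hP1, Fin.prod_univ_succ]
      congr 1
      apply Finset.prod_congr rfl
      intro i _
      congr 2
      show n ^ r ^ ((i : ℕ) + 1 + 1) = (n ^ r) ^ r ^ ((i : ℕ) + 1)
      rw [← pow_mul, ← pow_succ']
    rcases eq_or_ne c 0 with hc0 | hc0
    · have hL : rchoose a r * P1 = 0 := by rw [hsplit, hc0]; ring
      calc rchoose a r * P1 = 0 := hL
        _ ≤ Psi r (k+1) N EE := (Psi_props r (k+1) N).2.2 _
    · have hn : 1 ≤ n := by
        rcases Nat.eq_zero_or_pos n with rfl | h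
        · exfalso; apply hc0
          have h0 : N 0 = 0 := by
            show (0:ℕ) ^ r ^ (0 + 1) = 0
            exact zero_pow (by positivity)
          rw [hc, h0, Nat.choose_eq_zero_of_lt hr, Nat.cast_zero]
        · exact h
      have hn1 : (1:ℝ) ≤ (n:ℝ) := by exact_mod_cast hn
      have hcpos : 0 < c := lt_of_le_of_ne (by positivity) (Ne.symm hc0)
      have hMeq : M = ∏ i : Fin (k + 1), ((n : ℝ) ^ r ^ ((i : ℕ) + 2)) := by
        rw [hM]
        apply Finset.prod_congr rfl
        intro i _
        show ((n ^ r ^ (((i : ℕ)) + 1 + 1) : ℕ) : ℝ) = (n : ℝ) ^ r ^ ((i : ℕ) + 2)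
        push_cast; ring_nf
      have hMpos : 0 < M := by
        rw [hMeq]; apply Finset.prod_pos; intro i _; positivity
      have hEEM : EE / M = a := by rw [hEE, ← hMeq, mul_div_assoc, div_self hMpos.ne', mul_one]
      -- new parameter
      set a' : ℝ := ∏ i ∈ range r, (a - i) with ha'
      have ha'_eq : a' = (r.factorial : ℝ) * rchoose a r := (factorial_mul_rchoose a).symm
      have haa' : a ≤ a' := self_le_prod_sub hr ha
      have hra' : (r : ℝ) ≤ a' := le_trans ha haa'
      have hrch' : rchoose a r ≤ rchoose a' r :=
        rchoose_monotoneOn (Set.mem_Ici.2 ha1) (Set.mem_Ici.2 (by linarith)) haa'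
      have hN' : (fun i : Fin (k+1) => N i.succ) =
          (fun i : Fin (k+1) => (n ^ r) ^ r ^ ((i:ℕ) + 1)) := by
        funext i
        show n ^ r ^ ((i : ℕ) + 1 + 1) = (n ^ r) ^ r ^ ((i : ℕ) + 1)
        rw [← pow_mul, ← pow_succ']
      have hIH := ih (n ^ r) a' hra'
      rw [← hN'] at hIH
      set Q : ℝ := ∏ i : Fin k, (((n ^ r : ℕ) : ℝ)) ^ r ^ ((i:ℕ) + 2) with hQdef
      have hQpos : 0 < Q := by
        apply Finset.prod_pos; intro i _
        have : (1:ℝ) ≤ ((n ^ r : ℕ) : ℝ) := by exact_mod_cast Nat.one_le_pow _ _ hn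
        positivity
      have hMQ : M = (n : ℝ) ^ r ^ 2 * Q := by
        rw [hMeq, Fin.prod_univ_succ, hQdef]
        congr 1
        apply Finset.prod_congr rfl
        intro i _
        show (n:ℝ) ^ r ^ ((i:ℕ) + 1 + 2) = (((n ^ r : ℕ) : ℝ)) ^ r ^ ((i:ℕ) + 2)
        push_cast
        rw [← pow_mul, ← pow_succ']
      have hkey : c * (r.factorial : ℝ) ≤ (n : ℝ) ^ r ^ 2 := by
        have h1 : (N 0).choose r * r.factorial ≤ n ^ r ^ 2 := by
          have h2 : (N 0).choose r * r.factorial ≤ (N 0).descFactorial r := by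
            rw [Nat.descFactorial_eq_factorial_mul_choose, Nat.mul_comm]
          refine h2.trans ?_
          calc (N 0).descFactorial r ≤ (N 0) ^ r := Nat.descFactorial_le_pow _ _
            _ = n ^ r ^ 2 := by
              show (n ^ r ^ (0 + 1)) ^ r = n ^ r ^ 2
              rw [← pow_mul, ← pow_succ]
        calc c * (r.factorial : ℝ) = (((N 0).choose r * r.factorial : ℕ) : ℝ) := by
              rw [hc]; push_cast; ring
          _ ≤ _ := by exact_mod_cast h1
      have hedge2 : a' * Q ≤ M * rchoose a r / c := by
        rw [le_div_iff₀ hcpos, hMQ, ha'_eq]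
        calc (r.factorial : ℝ) * rchoose a r * Q * c
            = rchoose a r * Q * (c * (r.factorial:ℝ)) := by ring
          _ ≤ rchoose a r * Q * ((n:ℝ) ^ r ^ 2) := by
              apply mul_le_mul_of_nonneg_left hkey
              exact mul_nonneg hrch hQpos.le
          _ = (n:ℝ) ^ r ^ 2 * Q * rchoose a r := by ring
      obtain ⟨hmono, _, _⟩ := Psi_props r k (fun i => N i.succ)
      calc rchoose a r * P1 = c * (rchoose a r * P2) := by rw [hsplit]; ring
        _ ≤ c * (rchoose a' r * P2) := by
            apply mul_le_mul_of_nonneg_left ?_ hcpos.le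
            apply mul_le_mul_of_nonneg_right hrch'
            rw [hP2]; positivity
        _ ≤ c * Psi r k (fun i => N i.succ) (a' * Q) := by
            apply mul_le_mul_of_nonneg_left ?_ hcpos.le
            exact hIH
        _ ≤ c * Psi r k (fun i => N i.succ) (M * rchoose a r / c) := by
            apply mul_le_mul_of_nonneg_left (hmono hedge2) hcpos.le
        _ = Psi r (k+1) N EE := by rw [hPsiEq, hEEM, g0_eq ha1]

def copiesF (r : ℕ) {k : ℕ} (N : Fin k → ℕ) (E : Finset (∀ i, Fin (N i))) :
    Finset (∀ i, Finset (Fin (N i))) :=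
  Finset.filter
    (fun A => (∀ i, (A i).card = r) ∧ ∀ g : ∀ i, Fin (N i), (∀ i, g i ∈ A i) → g ∈ E)
    Finset.univ

lemma mem_copiesF {r k : ℕ} {N : Fin k → ℕ} {E : Finset (∀ i, Fin (N i))}
    {A : ∀ i, Finset (Fin (N i))} :
    A ∈ copiesF r N E ↔
      (∀ i, (A i).card = r) ∧ ∀ g : ∀ i, Fin (N i), (∀ i, g i ∈ A i) → g ∈ E := by
  unfold copiesF
  rw [Finset.mem_filter]
  simp only [Finset.mem_univ, true_and]

def linkF {k : ℕ} (N : Fin (k+1) → ℕ) (E : Finset (∀ i, Fin (N i)))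
    (R : Finset (Fin (N 0))) : Finset (∀ i : Fin k, Fin (N i.succ)) :=
  Finset.filter (fun g => ∀ v ∈ R, Fin.cons (α := fun i => Fin (N i)) v g ∈ E)
    Finset.univ

lemma mem_linkF {k : ℕ} {N : Fin (k+1) → ℕ} {E : Finset (∀ i, Fin (N i))}
    {R : Finset (Fin (N 0))} {g : ∀ i : Fin k, Fin (N i.succ)} :
    g ∈ linkF N E R ↔ ∀ v ∈ R, Fin.cons (α := fun i => Fin (N i)) v g ∈ E := by
  unfold linkF
  rw [Finset.mem_filter]
  simp only [Finset.mem_univ, true_and]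

def nbrF {k : ℕ} (N : Fin (k+1) → ℕ) (E : Finset (∀ i, Fin (N i)))
    (g : ∀ i : Fin k, Fin (N i.succ)) : Finset (Fin (N 0)) :=
  Finset.filter (fun v => Fin.cons (α := fun i => Fin (N i)) v g ∈ E)
    Finset.univ

lemma mem_nbrF {k : ℕ} {N : Fin (k+1) → ℕ} {E : Finset (∀ i, Fin (N i))}
    {g : ∀ i : Fin k, Fin (N i.succ)} {v : Fin (N 0)} :
    v ∈ nbrF N E g ↔ Fin.cons (α := fun i => Fin (N i)) v g ∈ E := by
  unfold nbrF
  rw [Finset.mem_filter]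
  simp only [Finset.mem_univ, true_and]

/-- Double counting: edges and neighbourhoods. -/
lemma card_eq_sum_nbrF {k : ℕ} (N : Fin (k+1) → ℕ) (E : Finset (∀ i, Fin (N i))) :
    E.card = ∑ g : ∀ i : Fin k, Fin (N i.succ), (nbrF N E g).card := by
  classical
  rw [← Finset.card_sigma]
  apply Finset.card_bij' (i := fun f _ => (⟨Fin.tail f, f 0⟩ : Σ _g : ∀ i : Fin k, Fin (N i.succ), Fin (N 0)))
    (j := fun p _ => Fin.cons (α := fun i => Fin (N i)) p.2 p.1)
  · intro f hf
    rw [Finset.mem_sigma]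
    refine ⟨Finset.mem_univ _, ?_⟩
    rw [mem_nbrF, Fin.cons_self_tail]
    exact hf
  · intro p hp
    rw [Finset.mem_sigma] at hp
    exact mem_nbrF.1 hp.2
  · intro f _
    simp [Fin.cons_self_tail]
  · intro p _
    simp [Fin.tail_cons, Fin.cons_zero]

/-- Double counting: links versus binomials of neighbourhoods. -/
lemma sum_linkF_card {r k : ℕ} (N : Fin (k+1) → ℕ) (E : Finset (∀ i, Fin (N i))) :
    ∑ R ∈ Finset.powersetCard r (Finset.univ : Finset (Fin (N 0))), (linkF N E R).card
      = ∑ g : ∀ i : Fin k, Fin (N i.succ), (nbrF N E g).card.choose r := by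
  classical
  have hrhs : ∀ g : ∀ i : Fin k, Fin (N i.succ),
      (nbrF N E g).card.choose r = (Finset.powersetCard r (nbrF N E g)).card := fun g =>
    (Finset.card_powersetCard r _).symm
  rw [Finset.sum_congr rfl (fun g _ => hrhs g), ← Finset.card_sigma, ← Finset.card_sigma]
  apply Finset.card_bij' (i := fun p _ => (⟨p.2, p.1⟩ : Σ _g : ∀ i : Fin k, Fin (N i.succ), Finset (Fin (N 0))))
    (j := fun p _ => (⟨p.2, p.1⟩ : Σ _R : Finset (Fin (N 0)), ∀ i : Fin k, Fin (N i.succ)))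
  · rintro ⟨R, g⟩ hp
    rw [Finset.mem_sigma] at hp
    obtain ⟨hR, hg⟩ := hp
    rw [Finset.mem_powersetCard] at hR
    rw [Finset.mem_sigma, Finset.mem_powersetCard]
    refine ⟨Finset.mem_univ _, ?_, hR.2⟩
    intro v hv
    rw [mem_nbrF]
    exact mem_linkF.1 hg v hv
  · rintro ⟨g, R⟩ hp
    rw [Finset.mem_sigma, Finset.mem_powersetCard] at hp
    obtain ⟨-, hsub, hcard⟩ := hp
    rw [Finset.mem_sigma, Finset.mem_powersetCard]
    refine ⟨⟨Finset.subset_univ _, hcard⟩, ?_⟩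
    rw [mem_linkF]
    intro v hv
    exact mem_nbrF.1 (hsub hv)
  · rintro ⟨R, g⟩ _; rfl
  · rintro ⟨g, R⟩ _; rfl

/-- Copies decompose along the first part. -/
lemma sum_copiesF_le {r k : ℕ} (N : Fin (k+1) → ℕ) (E : Finset (∀ i, Fin (N i))) :
    ∑ R ∈ Finset.powersetCard r (Finset.univ : Finset (Fin (N 0))),
        (copiesF r (fun i : Fin k => N i.succ) (linkF N E R)).card
      ≤ (copiesF r N E).card := by
  classical
  rw [← Finset.card_sigma]
  apply Finset.card_le_card_of_injOn
    (f := fun p => Fin.cons (α := fun i => Finset (Fin (N i))) p.1 p.2)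
  · rintro ⟨R, B⟩ hp
    rw [Finset.mem_coe, Finset.mem_sigma, Finset.mem_powersetCard] at hp
    obtain ⟨⟨-, hRcard⟩, hB⟩ := hp
    rw [Finset.mem_coe]
    rw [mem_copiesF] at hB ⊢
    obtain ⟨hBcard, hBcond⟩ := hB
    constructor
    · intro i
      refine Fin.cases ?_ ?_ i
      · simpa [Fin.cons_zero] using hRcard
      · intro j; simpa [Fin.cons_succ] using hBcard j
    · intro g hg
      have h0 : g 0 ∈ R := by simpa [Fin.cons_zero] using hg 0
      have ht : ∀ i : Fin k, Fin.tail g i ∈ B i := by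
        intro i
        have := hg i.succ
        simpa [Fin.cons_succ, Fin.tail] using this
      have htail : Fin.tail g ∈ linkF N E R := hBcond _ ht
      have := mem_linkF.1 htail (g 0) h0
      rwa [Fin.cons_self_tail] at this
  · rintro ⟨R, B⟩ - ⟨R', B'⟩ - h
    have h2 := Fin.cons_injective2 (α := fun i => Finset (Fin (N i))) h
    exact Sigma.ext h2.1 (heq_of_eq h2.2)

/-- Base case: `k = 0`, a 1-partite graph. -/
lemma copiesF_lower_base (r : ℕ) (N : Fin 1 → ℕ) (E : Finset (∀ i, Fin (N i))) :
    ((E.card.choose r : ℕ) : ℝ) ≤ ((copiesF r N E).card : ℝ) := by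
  classical
  have h : E.card.choose r ≤ (copiesF r N E).card := by
    rw [← Finset.card_powersetCard]
    apply Finset.card_le_card_of_injOn (f := fun S => fun i => S.image (fun f => f i))
    · intro S hS
      rw [Finset.mem_coe, Finset.mem_powersetCard] at hS
      obtain ⟨hsub, hcard⟩ := hS
      have hinj : ∀ i : Fin 1, Set.InjOn (fun f : ∀ j, Fin (N j) => f i) S := by
        intro i f _ g _ hfg
        funext j
        have : j = i := Subsingleton.elim j i
        rw [this]; exact hfg
      rw [Finset.mem_coe, mem_copiesF]
      constructor
      · intro i
        rw [Finset.card_image_of_injOn (hinj i), hcard]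
      · intro g hg
        have h0 := hg 0
        simp only [Finset.mem_image] at h0
        obtain ⟨f, hfS, hf0⟩ := h0
        have : f = g := by
          funext j
          have hj : j = (0 : Fin 1) := Subsingleton.elim j 0
          rw [hj]; exact hf0
        rw [← this]
        exact hsub hfS
    · intro S _hS S' _hS' h
      ext f
      constructor
      · intro hf
        have h0 : f 0 ∈ S'.image (fun f => f (0 : Fin 1)) := by
          have hc := congrFun h 0
          simp only at hc
          rw [← hc]
          exact Finset.mem_image_of_mem _ hf
        simp only [Finset.mem_image] at h0
        obtain ⟨f', hf', hff'⟩ := h0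
        have : f' = f := by
          funext j
          have hj : j = (0 : Fin 1) := Subsingleton.elim j 0
          rw [hj]; exact hff'
        rwa [← this]
      · intro hf
        have h0 : f 0 ∈ S.image (fun f => f (0 : Fin 1)) := by
          have hc := congrFun h 0
          simp only at hc
          rw [hc]
          exact Finset.mem_image_of_mem _ hf
        simp only [Finset.mem_image] at h0
        obtain ⟨f', hf', hff'⟩ := h0
        have : f' = f := by
          funext j
          have hj : j = (0 : Fin 1) := Subsingleton.elim j 0
          rw [hj]; exact hff'
        rwa [← this]
  exact_mod_cast h

lemma copiesF_lower (r : ℕ) : ∀ (k : ℕ) (N : Fin (k+1) → ℕ) (E : Finset (∀ i, Fin (N i))),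
    Psi r k N (E.card) ≤ ((copiesF r N E).card : ℝ) := by
  intro k
  induction k with
  | zero =>
    intro N E
    show g0 r (E.card : ℝ) ≤ _
    rw [g0_natCast]
    exact copiesF_lower_base r N E
  | succ k ih =>
    intro N E
    classical
    set N' : Fin (k+1) → ℕ := fun i => N i.succ with hN'
    set c : ℝ := ((N 0).choose r : ℝ) with hc
    set M : ℝ := ∏ i : Fin (k + 1), (N i.succ : ℝ) with hM
    set 𝒜 : Finset (Finset (Fin (N 0))) :=
      Finset.powersetCard r (Finset.univ : Finset (Fin (N 0))) with h𝒜
    have h𝒜card : ((𝒜.card : ℕ) : ℝ) = c := by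
      rw [h𝒜, Finset.card_powersetCard, Finset.card_univ, Fintype.card_fin, hc]
    have hPsiEq : Psi r (k+1) N (E.card : ℝ)
        = c * Psi r k N' (M * g0 r ((E.card : ℝ) / M) / c) := rfl
    obtain ⟨hmono, hconv, hnonneg⟩ := Psi_props r k N'
    have hM0 : 0 ≤ M := by positivity
    have hc0 : 0 ≤ c := by positivity
    -- first Jensen : sum over tail vertices
    have hMcard : ((Fintype.card (∀ i : Fin (k+1), Fin (N i.succ)) : ℕ) : ℝ) = M := by
      rw [Fintype.card_pi]
      push_cast
      apply Finset.prod_congr rfl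
      intro i _
      rw [Fintype.card_fin]
    have hsum_nbr : M * g0 r ((E.card : ℝ) / M)
        ≤ ∑ g : ∀ i : Fin (k+1), Fin (N i.succ), ((nbrF N E g).card.choose r : ℝ) := by
      have hj := jensen_card (Finset.univ : Finset (∀ i : Fin (k+1), Fin (N i.succ)))
        (fun g => ((nbrF N E g).card : ℝ)) (g0_convexOn r)
      rw [Finset.card_univ, hMcard] at hj
      have hsum : ∑ g : ∀ i : Fin (k+1), Fin (N i.succ), ((nbrF N E g).card : ℝ)
          = (E.card : ℝ) := by
        rw [card_eq_sum_nbrF N E]; push_cast; rfl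
      rw [hsum] at hj
      refine hj.trans ?_
      apply Finset.sum_le_sum
      intro g _
      rw [g0_natCast]
    -- second Jensen : sum over r-subsets of the first part
    have hlink_sum : M * g0 r ((E.card : ℝ) / M) ≤ ∑ R ∈ 𝒜, ((linkF N E R).card : ℝ) := by
      refine hsum_nbr.trans (le_of_eq ?_)
      have h := sum_linkF_card (r := r) N E
      calc ∑ g : ∀ i : Fin (k+1), Fin (N i.succ), ((nbrF N E g).card.choose r : ℝ)
          = ((∑ g : ∀ i : Fin (k+1), Fin (N i.succ), (nbrF N E g).card.choose r : ℕ) : ℝ) := by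
            push_cast; rfl
        _ = ((∑ R ∈ 𝒜, (linkF N E R).card : ℕ) : ℝ) := by rw [h]
        _ = ∑ R ∈ 𝒜, ((linkF N E R).card : ℝ) := by push_cast; rfl
    rcases eq_or_lt_of_le hc0 with hceq | hcpos
    · rw [hPsiEq, ← hceq, zero_mul]
      positivity
    · have hjensen := jensen_card 𝒜 (fun R => ((linkF N E R).card : ℝ)) hconv
      rw [h𝒜card] at hjensen
      have hargle : M * g0 r ((E.card : ℝ) / M) / c
          ≤ (∑ R ∈ 𝒜, ((linkF N E R).card : ℝ)) / c :=
        div_le_div_of_nonneg_right hlink_sum hc0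
      calc Psi r (k+1) N (E.card : ℝ)
          = c * Psi r k N' (M * g0 r ((E.card : ℝ) / M) / c) := hPsiEq
        _ ≤ c * Psi r k N' ((∑ R ∈ 𝒜, ((linkF N E R).card : ℝ)) / c) :=
            mul_le_mul_of_nonneg_left (hmono hargle) hc0
        _ ≤ ∑ R ∈ 𝒜, Psi r k N' ((linkF N E R).card : ℝ) := hjensen
        _ ≤ ∑ R ∈ 𝒜, ((copiesF r N' (linkF N E R)).card : ℝ) := by
            apply Finset.sum_le_sum
            intro R _
            exact ih N' (linkF N E R)
        _ ≤ ((copiesF r N E).card : ℝ) := by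
            have := sum_copiesF_le (r := r) N E
            calc ∑ R ∈ 𝒜, ((copiesF r N' (linkF N E R)).card : ℝ)
                = ((∑ R ∈ 𝒜, (copiesF r N' (linkF N E R)).card : ℕ) : ℝ) := by push_cast; rfl
              _ ≤ _ := by exact_mod_cast this

/-- A `k`-partite `k`-graph with parts `U_1, …, U_k` of sizes `|U_i| = n^(r^i)` (edges are
modelled as transversal functions) having `a * ∏_{i≥2} |U_i|` edges, `a ≥ r`, contains at
least `C(a,r) * ∏_{i ≤ k-1} C(|U_i|, r)` copies of `K^(k)_{r,…,r}`. -/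
theorem stmt9 (k n r : ℕ) (hk : 1 ≤ k) (hr : 1 ≤ r) (a : ℝ) (ha : (r : ℝ) ≤ a)
    (E : Finset ((i : Fin k) → Fin (n ^ r ^ ((i : ℕ) + 1))))
    (hE : (E.card : ℝ) = a * ∏ i ∈ Finset.Ico 2 (k + 1), ((n : ℝ) ^ r ^ i)) :
    (({A : (i : Fin k) → Finset (Fin (n ^ r ^ ((i : ℕ) + 1))) |
        (∀ i, (A i).card = r) ∧
        ∀ g : (i : Fin k) → Fin (n ^ r ^ ((i : ℕ) + 1)),
          (∀ i, g i ∈ A i) → g ∈ E}).ncard : ℝ) ≥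
      rchoose a r * ∏ i ∈ Finset.Ico 1 k, (((n ^ r ^ i).choose r : ℕ) : ℝ) := by
  obtain ⟨k', rfl⟩ : ∃ k', k = k' + 1 := ⟨k - 1, (Nat.succ_pred_eq_of_pos hk).symm⟩
  set N : Fin (k' + 1) → ℕ := fun i => n ^ r ^ ((i : ℕ) + 1) with hN
  have hset : {A : (i : Fin (k'+1)) → Finset (Fin (n ^ r ^ ((i : ℕ) + 1))) |
        (∀ i, (A i).card = r) ∧
        ∀ g : (i : Fin (k'+1)) → Fin (n ^ r ^ ((i : ℕ) + 1)),
          (∀ i, g i ∈ A i) → g ∈ E} = ↑(copiesF r N E) := by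
    ext A
    rw [Set.mem_setOf_eq, Finset.mem_coe, mem_copiesF]
  rw [hset, Set.ncard_coe_finset]
  -- rewrite the edge count
  have hcard : (E.card : ℝ) = a * ∏ i : Fin k', ((n : ℝ) ^ r ^ ((i : ℕ) + 2)) := by
    rw [hE]
    congr 1
    rw [Finset.prod_Ico_eq_prod_range]
    have h2 : k' + 1 + 1 - 2 = k' := by omega
    rw [h2, ← Fin.prod_univ_eq_prod_range (fun i => (n : ℝ) ^ r ^ (2 + i)) k']
    apply Finset.prod_congr rfl
    intro i _
    rw [Nat.add_comm]
  -- rewrite the binomial product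
  have hprod : ∏ i ∈ Finset.Ico 1 (k' + 1), (((n ^ r ^ i).choose r : ℕ) : ℝ)
      = ∏ i : Fin k', (((n ^ r ^ ((i : ℕ) + 1)).choose r : ℕ) : ℝ) := by
    rw [Finset.prod_Ico_eq_prod_range]
    have h2 : k' + 1 - 1 = k' := by omega
    rw [h2, ← Fin.prod_univ_eq_prod_range (fun i => (((n ^ r ^ (1 + i)).choose r : ℕ) : ℝ)) k']
    apply Finset.prod_congr rfl
    intro i _
    rw [Nat.add_comm]
  rw [ge_iff_le, hprod]
  calc rchoose a r * ∏ i : Fin k', (((n ^ r ^ ((i : ℕ) + 1)).choose r : ℕ) : ℝ)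
      ≤ Psi r k' (fun i => n ^ r ^ ((i : ℕ) + 1))
          (a * ∏ i : Fin k', ((n : ℝ) ^ r ^ ((i : ℕ) + 2))) := psi_lower r hr k' n a ha
    _ = Psi r k' N (E.card : ℝ) := by rw [hcard]
    _ ≤ _ := copiesF_lower r k' N E
end

section
/- Let 2 <= r, k, q = (r^k-1)/(r-1), and let G be the complete k-partite k-uniform hypergraph with parts U_1,...,U_k where |U_i| = m^{r^{i-1}/q} (assume these are integers). Then G has m edges, and every K^{(k)}_{r,...,r}-free subhypergraph of G has at most r * m^{(q-1)/q} edges. -/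
open Finset

private lemma choose_lb {r : ℕ} (hr : 1 ≤ r) (d : ℕ) : d ≤ Nat.choose d r + (r - 1) := by
  obtain ⟨m, rfl⟩ : ∃ m, r = m + 1 := ⟨r - 1, by omega⟩
  induction d with
  | zero => exact Nat.zero_le _
  | succ d ih =>
    rcases Nat.lt_or_ge d m with h | h
    · omega
    · have h1 : 0 < Nat.choose d m := Nat.choose_pos h
      have h2 := Nat.choose_succ_succ' d m
      omega

private lemma rc_le_pow (r t : ℕ) : r * Nat.choose t r ≤ t ^ r :=
  calc r * Nat.choose t r ≤ Nat.factorial r * Nat.choose t r :=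
        Nat.mul_le_mul_right _ (Nat.self_le_factorial r)
    _ = t.descFactorial r := (Nat.descFactorial_eq_factorial_mul_choose t r).symm
    _ ≤ t ^ r := Nat.descFactorial_le_pow t r

/-- Double counting on a bipartite-type product: if every `r`-subset `S` of `α` has
link of size at most `L`, then `|E| ≤ C(|α|,r) * L + (r-1) * |β|`. -/
private lemma count {α β : Type*} [Fintype α] [Fintype β] [DecidableEq α] [DecidableEq β]
    {r : ℕ} (L : ℕ) (hr : 1 ≤ r) (E : Finset (α × β))
    (hL : ∀ S ∈ Finset.powersetCard r (Finset.univ : Finset α),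
      ((Finset.univ : Finset β).filter (fun b => ∀ a ∈ S, (a, b) ∈ E)).card ≤ L) :
    E.card ≤ Nat.choose (Fintype.card α) r * L + (r - 1) * Fintype.card β := by
  classical
  set N : β → Finset α := fun b => Finset.univ.filter (fun a => (a, b) ∈ E) with hN
  have hcard : E.card = ∑ b : β, (N b).card := by
    conv_lhs => rw [← Finset.filter_univ_mem E]
    rw [Finset.card_filter, Fintype.sum_prod_type, Finset.sum_comm]
    exact Finset.sum_congr rfl fun b _ => (Finset.card_filter _ _).symm
  have hfilt : ∀ S : Finset α,
      (Finset.univ : Finset β).filter (fun b => ∀ a ∈ S, (a, b) ∈ E)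
        = (Finset.univ : Finset β).filter (fun b => S ⊆ N b) := by
    intro S
    refine Finset.filter_congr fun b _ => ?_
    simp [hN, Finset.subset_iff]
  have hdc : ∑ S ∈ Finset.powersetCard r (Finset.univ : Finset α),
      ((Finset.univ : Finset β).filter (fun b => ∀ a ∈ S, (a, b) ∈ E)).card
        = ∑ b : β, Nat.choose (N b).card r := by
    have h1 : ∀ S : Finset α,
        ((Finset.univ : Finset β).filter (fun b => ∀ a ∈ S, (a, b) ∈ E)).card
          = ∑ b : β, if S ⊆ N b then 1 else 0 := by
      intro S
      rw [hfilt S, Finset.card_filter]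
    rw [Finset.sum_congr rfl fun S _ => h1 S, Finset.sum_comm]
    refine Finset.sum_congr rfl fun b _ => ?_
    have h2 : (Finset.powersetCard r (Finset.univ : Finset α)).filter (fun S => S ⊆ N b)
        = Finset.powersetCard r (N b) := by
      ext S
      simp only [Finset.mem_filter, Finset.mem_powersetCard]
      exact ⟨fun ⟨⟨_, h1⟩, h2⟩ => ⟨h2, h1⟩, fun ⟨h2, h1⟩ => ⟨⟨Finset.subset_univ S, h1⟩, h2⟩⟩
    calc (∑ S ∈ Finset.powersetCard r (Finset.univ : Finset α), if S ⊆ N b then 1 else 0)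
        = ((Finset.powersetCard r (Finset.univ : Finset α)).filter (fun S => S ⊆ N b)).card :=
          (Finset.card_filter _ _).symm
      _ = Nat.choose (N b).card r := by rw [h2, Finset.card_powersetCard]
  calc E.card = ∑ b : β, (N b).card := hcard
    _ ≤ ∑ b : β, (Nat.choose (N b).card r + (r - 1)) :=
        Finset.sum_le_sum fun b _ => choose_lb hr _
    _ = (∑ b : β, Nat.choose (N b).card r) + (r - 1) * Fintype.card β := by
        rw [Finset.sum_add_distrib, Finset.sum_const, Finset.card_univ, smul_eq_mul]
        ring
    _ = (∑ S ∈ Finset.powersetCard r (Finset.univ : Finset α),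
          ((Finset.univ : Finset β).filter (fun b => ∀ a ∈ S, (a, b) ∈ E)).card)
        + (r - 1) * Fintype.card β := by rw [hdc]
    _ ≤ Nat.choose (Fintype.card α) r * L + (r - 1) * Fintype.card β := by
        refine Nat.add_le_add_right ?_ _
        calc ∑ S ∈ Finset.powersetCard r (Finset.univ : Finset α),
              ((Finset.univ : Finset β).filter (fun b => ∀ a ∈ S, (a, b) ∈ E)).card
            ≤ (Finset.powersetCard r (Finset.univ : Finset α)).card * L :=
              Finset.sum_le_card_nsmul _ _ _ hL
          _ = Nat.choose (Fintype.card α) r * L := by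
              rw [Finset.card_powersetCard, Finset.card_univ]

private lemma aux (r : ℕ) (hr : 2 ≤ r) (k : ℕ) :
    ∀ (t : ℕ) (E : Finset ((i : Fin k) → Fin (t ^ r ^ (i : ℕ)))),
      (¬ ∃ A : (i : Fin k) → Finset (Fin (t ^ r ^ (i : ℕ))),
        (∀ i, (A i).card = r) ∧
        ∀ g : (i : Fin k) → Fin (t ^ r ^ (i : ℕ)), (∀ i, g i ∈ A i) → g ∈ E) →
      E.card ≤ r * t ^ ((∑ i ∈ Finset.range k, r ^ i) - 1) := by
  induction k with
  | zero =>
    intro t E _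
    have h1 : E.card ≤ 1 := by
      have := Finset.card_le_univ E
      simpa using this
    have h2 : r * t ^ ((∑ i ∈ Finset.range 0, r ^ i) - 1) = r := by simp
    rw [h2]
    omega
  | succ k ih =>
    intro t E hE
    rcases Nat.eq_zero_or_pos k with rfl | hk1
    · -- one part
      by_contra hlt
      push_neg at hlt
      have hbd : r * t ^ ((∑ i ∈ Finset.range 1, r ^ i) - 1) = r := by simp
      rw [hbd] at hlt
      have hinj : Function.Injective (fun g : (i : Fin 1) → Fin (t ^ r ^ (i : ℕ)) => g 0) := by
        intro g g' hgg
        funext i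
        rw [Fin.eq_zero i]
        exact hgg
      have hr' : r ≤ (E.image (fun g => g 0)).card := by
        rw [Finset.card_image_of_injective _ hinj]
        omega
      obtain ⟨B, hBsub, hBcard⟩ := Finset.exists_subset_card_eq hr'
      apply hE
      refine ⟨fun i => Fin.cases (motive := fun i : Fin 1 => Finset (Fin (t ^ r ^ (i : ℕ)))) B
        (fun j => j.elim0) i, fun i => ?_, fun g hg => ?_⟩
      · induction i using Fin.cases with
        | zero => simpa using hBcard
        | succ j => exact j.elim0
      · have h0 : g 0 ∈ B := by simpa using hg 0
        have hmem := hBsub h0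
        simp only [Finset.mem_image] at hmem
        obtain ⟨g', hg', hgg'⟩ := hmem
        have : g' = g := hinj hgg'
        rwa [← this]
    · -- k ≥ 1
      have hcast0 : t ^ r ^ ((0 : Fin (k + 1)) : ℕ) = t := by simp
      have hcastS : ∀ i : Fin k, (t ^ r) ^ r ^ (i : ℕ) = t ^ r ^ ((i.succ : Fin (k + 1)) : ℕ) := by
        intro i
        rw [Fin.val_succ, pow_succ', pow_mul]
      set q' := ∑ i ∈ Finset.range k, r ^ i with hq'
      have hq1 : 1 ≤ q' := by
        have h0 : r ^ 0 ≤ q' := Finset.single_le_sum (f := fun i => r ^ i)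
          (fun i _ => Nat.zero_le _) (Finset.mem_range.mpr hk1)
        simpa using h0
      set cons' : Fin t → ((i : Fin k) → Fin ((t ^ r) ^ r ^ (i : ℕ))) →
          ((i : Fin (k + 1)) → Fin (t ^ r ^ (i : ℕ))) :=
        fun v g => Fin.cons (finCongr hcast0.symm v) (fun j => finCongr (hcastS j) (g j))
        with hcons
      have hretr : ∀ g : (i : Fin (k + 1)) → Fin (t ^ r ^ (i : ℕ)),
          cons' (finCongr hcast0 (g 0)) (fun i => finCongr (hcastS i).symm (g i.succ)) = g := by
        intro g
        funext j
        induction j using Fin.cases with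
        | zero => rfl
        | succ j => rfl
      set E'' : Finset (Fin t × ((i : Fin k) → Fin ((t ^ r) ^ r ^ (i : ℕ)))) :=
        Finset.univ.filter (fun p => cons' p.1 p.2 ∈ E) with hE''
      have hmem'' : ∀ (v : Fin t) (h : (i : Fin k) → Fin ((t ^ r) ^ r ^ (i : ℕ))),
          (v, h) ∈ E'' ↔ cons' v h ∈ E := by
        intro v h
        simp [hE'']
      have hEE'' : E.card ≤ E''.card := by
        apply Finset.card_le_card_of_injOn
          (fun g => (finCongr hcast0 (g 0), fun i => finCongr (hcastS i).symm (g i.succ)))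
        · intro g hg
          simp only [Finset.mem_coe]
          rw [hmem'' _ _, hretr g]
          exact hg
        · intro g _ g' _ hgg
          simp only [Prod.mk.injEq] at hgg
          rw [← hretr g, ← hretr g', hgg.1, hgg.2]
      have hcount : E''.card ≤ Nat.choose (Fintype.card (Fin t)) r * (r * (t ^ r) ^ (q' - 1))
          + (r - 1) * Fintype.card ((i : Fin k) → Fin ((t ^ r) ^ r ^ (i : ℕ))) := by
        refine count (r * (t ^ r) ^ (q' - 1)) ((by omega : (1:ℕ) ≤ r)) E'' ?_
        intro S hS
        rw [Finset.mem_powersetCard] at hS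
        refine ih (t ^ r) _ ?_
        rintro ⟨A, hA1, hA2⟩
        apply hE
        refine ⟨fun i => Fin.cases (motive := fun i : Fin (k + 1) => Finset (Fin (t ^ r ^ (i : ℕ))))
          (S.map (finCongr hcast0.symm).toEmbedding)
          (fun j => (A j).map (finCongr (hcastS j)).toEmbedding) i, fun i => ?_, fun g hg => ?_⟩
        · induction i using Fin.cases with
          | zero => exact (Finset.card_map _).trans hS.2
          | succ j => exact (Finset.card_map _).trans (hA1 j)
        · have h0 : finCongr hcast0 (g 0) ∈ S := by
            have hm := hg 0
            simp only [Fin.cases_zero, Finset.mem_map, Equiv.toEmbedding_apply] at hm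
            obtain ⟨x, hx, hxg⟩ := hm
            have hxx : x = finCongr hcast0 (g 0) := by
              apply_fun (finCongr hcast0) at hxg
              rw [← hxg]; rfl
            rwa [← hxx]
          have htail : ∀ j : Fin k, finCongr (hcastS j).symm (g j.succ) ∈ A j := by
            intro j
            have hm := hg j.succ
            simp only [Fin.cases_succ, Finset.mem_map, Equiv.toEmbedding_apply] at hm
            obtain ⟨x, hx, hxg⟩ := hm
            have hxx : x = finCongr (hcastS j).symm (g j.succ) := by
              apply_fun (finCongr (hcastS j).symm) at hxg
              simpa using hxg
            rwa [← hxx]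
          have hmem := hA2 _ htail
          simp only [Finset.mem_filter, Finset.mem_univ, true_and] at hmem
          have hg' := hmem _ h0
          rw [hmem'' _ _] at hg'
          rwa [hretr g] at hg'
      have hcardβ : Fintype.card ((i : Fin k) → Fin ((t ^ r) ^ r ^ (i : ℕ))) = (t ^ r) ^ q' := by
        rw [Fintype.card_pi]
        simp only [Fintype.card_fin]
        rw [Finset.prod_pow_eq_pow_sum, hq', Fin.sum_univ_eq_sum_range]
      rw [Fintype.card_fin, hcardβ] at hcount
      have h5 : Nat.choose t r * (r * (t ^ r) ^ (q' - 1)) ≤ (t ^ r) ^ q' := by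
        calc Nat.choose t r * (r * (t ^ r) ^ (q' - 1))
            = (r * Nat.choose t r) * (t ^ r) ^ (q' - 1) := by ring
          _ ≤ t ^ r * (t ^ r) ^ (q' - 1) := Nat.mul_le_mul_right _ (rc_le_pow r t)
          _ = (t ^ r) ^ q' := by
              rw [← pow_succ']
              congr 1
              omega
      have hexp : (∑ i ∈ Finset.range (k + 1), r ^ i) - 1 = r * q' := by
        rw [Finset.sum_range_succ', pow_zero]
        have hsr : ∑ i ∈ Finset.range k, r ^ (i + 1) = r * q' := by
          rw [hq', Finset.mul_sum]
          exact Finset.sum_congr rfl fun i _ => pow_succ' r i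
        rw [hsr]
        exact Nat.add_sub_cancel (r * q') 1
      rw [hexp, pow_mul]
      have hfin : (t ^ r) ^ q' + (r - 1) * (t ^ r) ^ q' = r * (t ^ r) ^ q' := by
        have h1r : 1 + (r - 1) = r := by omega
        calc (t ^ r) ^ q' + (r - 1) * (t ^ r) ^ q' = (1 + (r - 1)) * (t ^ r) ^ q' := by ring
          _ = r * (t ^ r) ^ q' := by rw [h1r]
      calc E.card ≤ E''.card := hEE''
        _ ≤ Nat.choose t r * (r * (t ^ r) ^ (q' - 1)) + (r - 1) * (t ^ r) ^ q' := hcount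
        _ ≤ (t ^ r) ^ q' + (r - 1) * (t ^ r) ^ q' := Nat.add_le_add_right h5 _
        _ = r * (t ^ r) ^ q' := hfin

/-- The complete `k`-partite `k`-graph with parts of sizes `|U_i| = t^(r^(i-1))`, where
`m = t^q` and `q = 1 + r + ⋯ + r^(k-1)`, has `m` edges, and every `K^(k)_{r,…,r}`-free
subhypergraph of it has at most `r * m^((q-1)/q) = r * t^(q-1)` edges. Edges are modelled
as transversal functions picking one vertex per part. -/
theorem stmt10 (k r q t m : ℕ) (hk : 2 ≤ k) (hr : 2 ≤ r)
    (hq : q = ∑ i ∈ Finset.range k, r ^ i) (hm : m = t ^ q) :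
    (Finset.univ : Finset ((i : Fin k) → Fin (t ^ r ^ (i : ℕ)))).card = m ∧
    ∀ E : Finset ((i : Fin k) → Fin (t ^ r ^ (i : ℕ))),
      (¬ ∃ A : (i : Fin k) → Finset (Fin (t ^ r ^ (i : ℕ))),
        (∀ i, (A i).card = r) ∧
        ∀ g : (i : Fin k) → Fin (t ^ r ^ (i : ℕ)), (∀ i, g i ∈ A i) → g ∈ E) →
      E.card ≤ r * t ^ (q - 1) := by
  constructor
  · rw [Finset.card_univ, Fintype.card_pi]
    simp only [Fintype.card_fin]
    rw [Finset.prod_pow_eq_pow_sum, Fin.sum_univ_eq_sum_range, ← hq, ← hm]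
  · intro E hKfree
    have := aux r hr k t E hKfree
    rwa [← hq] at this
end

section
/- Every graph G with m edges contains a C_4-free subgraph with at least (1/4) * m^{2/3} edges. -/
open Finset

namespace C4FreeAux

variable {V : Type*} [Fintype V] [DecidableEq V]

/-- Quadruples forming a 4-cycle with all edges in `S`, canonicalized so that the first
vertex has minimal `f`-value among the four. -/
def Quad (f : V → ℕ) (S : Finset (Sym2 V)) : Finset (V × V × V × V) :=
  Finset.univ.filter fun q =>
    s(q.1, q.2.1) ∈ S ∧ s(q.2.1, q.2.2.1) ∈ S ∧ s(q.2.2.1, q.2.2.2) ∈ S ∧ s(q.2.2.2, q.1) ∈ S ∧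
    q.1 ≠ q.2.1 ∧ q.2.1 ≠ q.2.2.1 ∧ q.2.2.1 ≠ q.2.2.2 ∧ q.2.2.2 ≠ q.1 ∧
    q.1 ≠ q.2.2.1 ∧ q.2.1 ≠ q.2.2.2 ∧
    f q.1 < f q.2.1 ∧ f q.1 < f q.2.2.1 ∧ f q.1 < f q.2.2.2

lemma mem_Quad {f : V → ℕ} {S : Finset (Sym2 V)} {a b c d : V} :
    (a, b, c, d) ∈ Quad f S ↔
      s(a, b) ∈ S ∧ s(b, c) ∈ S ∧ s(c, d) ∈ S ∧ s(d, a) ∈ S ∧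
      a ≠ b ∧ b ≠ c ∧ c ≠ d ∧ d ≠ a ∧ a ≠ c ∧ b ≠ d ∧
      f a < f b ∧ f a < f c ∧ f a < f d := by
  simp [Quad]

lemma Quad_mono {f : V → ℕ} {S T : Finset (Sym2 V)} (h : S ⊆ T) : Quad f S ⊆ Quad f T := by
  rintro ⟨a, b, c, d⟩ hq
  rw [mem_Quad] at hq ⊢
  obtain ⟨h1, h2, h3, h4, hr⟩ := hq
  exact ⟨h h1, h h2, h h3, h h4, hr⟩

lemma min4 {w x y z : ℕ} (h1 : w ≠ x) (h2 : w ≠ y) (h3 : w ≠ z) (h4 : x ≠ y) (h5 : x ≠ z)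
    (h6 : y ≠ z) :
    (w < x ∧ w < y ∧ w < z) ∨ (x < w ∧ x < y ∧ x < z) ∨ (y < w ∧ y < x ∧ y < z) ∨
      (z < w ∧ z < x ∧ z < y) := by omega

lemma canonicalize {f : V → ℕ} (hf : Function.Injective f) {S : Finset (Sym2 V)}
    {a b c d : V} (e1 : s(a, b) ∈ S) (e2 : s(b, c) ∈ S) (e3 : s(c, d) ∈ S) (e4 : s(d, a) ∈ S)
    (hab : a ≠ b) (hbc : b ≠ c) (hcd : c ≠ d) (hda : d ≠ a) (hac : a ≠ c) (hbd : b ≠ d) :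
    (Quad f S).Nonempty := by
  have hAB : f a ≠ f b := fun h => hab (hf h)
  have hAC : f a ≠ f c := fun h => hac (hf h)
  have hAD : f a ≠ f d := fun h => hda (hf h).symm
  have hBC : f b ≠ f c := fun h => hbc (hf h)
  have hBD : f b ≠ f d := fun h => hbd (hf h)
  have hCD : f c ≠ f d := fun h => hcd (hf h)
  rcases min4 hAB hAC hAD hBC hBD hCD with ⟨u1, u2, u3⟩ | ⟨u1, u2, u3⟩ | ⟨u1, u2, u3⟩ |
    ⟨u1, u2, u3⟩
  · exact ⟨(a, b, c, d), mem_Quad.2 ⟨e1, e2, e3, e4, hab, hbc, hcd, hda, hac, hbd, u1, u2, u3⟩⟩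
  · exact ⟨(b, c, d, a), mem_Quad.2 ⟨e2, e3, e4, e1, hbc, hcd, hda, hab, hbd, hac.symm,
      u2, u3, u1⟩⟩
  · exact ⟨(c, d, a, b), mem_Quad.2 ⟨e3, e4, e1, e2, hcd, hda, hab, hbc, hac.symm, hbd.symm,
      u3, u1, u2⟩⟩
  · exact ⟨(d, a, b, c), mem_Quad.2 ⟨e4, e1, e2, e3, hda, hab, hbc, hcd, hbd.symm, hac,
      u1, u2, u3⟩⟩

lemma Quad_card_le (f : V → ℕ) (S : Finset (Sym2 V)) :
    (Quad f S).card ≤ 2 * (S.card * S.card) := by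
  set φ : V × V × V × V → Sym2 V × Sym2 V :=
    fun q => (s(q.1, q.2.1), s(q.2.2.1, q.2.2.2)) with hφ
  have hmaps : ∀ q ∈ Quad f S, φ q ∈ S ×ˢ S := by
    rintro ⟨a, b, c, d⟩ hq
    rw [mem_Quad] at hq
    exact Finset.mem_product.2 ⟨hq.1, hq.2.2.1⟩
  calc (Quad f S).card ≤ 2 * ((Quad f S).image φ).card := by
        apply Finset.card_le_mul_card_image
        intro p hp
        rcases Finset.eq_empty_or_nonempty ((Quad f S).filter fun q => φ q = p) with he |
          ⟨⟨a0, b0, c0, d0⟩, hq0⟩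
        · simp [he]
        · have hsub : ((Quad f S).filter fun q => φ q = p) ⊆
              {(a0, b0, c0, d0), (a0, b0, d0, c0)} := by
            rintro ⟨a, b, c, d⟩ hq
            simp only [Finset.mem_filter] at hq hq0
            obtain ⟨hqQ, hqp⟩ := hq
            obtain ⟨hq0Q, hq0p⟩ := hq0
            rw [mem_Quad] at hqQ hq0Q
            have hpair : (s(a, b), s(c, d)) = (s(a0, b0), s(c0, d0)) := hqp.trans hq0p.symm
            have hab : s(a, b) = s(a0, b0) := congrArg Prod.fst hpair
            have hcd : s(c, d) = s(c0, d0) := congrArg Prod.snd hpair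
            rcases Sym2.eq_iff.1 hab with ⟨rfl, rfl⟩ | ⟨h1, h2⟩
            · rcases Sym2.eq_iff.1 hcd with ⟨rfl, rfl⟩ | ⟨rfl, rfl⟩
              · simp
              · simp
            · exfalso
              have g1 : f a0 < f b0 := hq0Q.2.2.2.2.2.2.2.2.2.2.1
              have g2 : f a < f b := hqQ.2.2.2.2.2.2.2.2.2.2.1
              rw [h1, h2] at g2
              omega
          refine (Finset.card_le_card hsub).trans ?_
          refine (Finset.card_insert_le _ _).trans ?_
          simp
    _ ≤ 2 * (S ×ˢ S).card :=
        Nat.mul_le_mul_left 2 (Finset.card_le_card (Finset.image_subset_iff.2 hmaps))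
    _ = 2 * (S.card * S.card) := by rw [Finset.card_product]

def edgesOf (q : V × V × V × V) : Finset (Sym2 V) :=
  {s(q.1, q.2.1), s(q.2.1, q.2.2.1), s(q.2.2.1, q.2.2.2), s(q.2.2.2, q.1)}

lemma card_edgesOf {a b c d : V} (hab : a ≠ b) (hbc : b ≠ c) (hcd : c ≠ d) (hda : d ≠ a)
    (hac : a ≠ c) (hbd : b ≠ d) : (edgesOf (a, b, c, d)).card = 4 := by
  have e12 : s(a, b) ∉ ({s(b, c), s(c, d), s(d, a)} : Finset (Sym2 V)) := by
    simp [Sym2.eq_iff, hab, hbc, hcd, hda, hac, hbd, hab.symm, hbc.symm, hcd.symm, hda.symm,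
      hac.symm, hbd.symm]
  have e23 : s(b, c) ∉ ({s(c, d), s(d, a)} : Finset (Sym2 V)) := by
    simp [Sym2.eq_iff, hab, hbc, hcd, hda, hac, hbd, hab.symm, hbc.symm, hcd.symm, hda.symm,
      hac.symm, hbd.symm]
  have e34 : s(c, d) ∉ ({s(d, a)} : Finset (Sym2 V)) := by
    simp [Sym2.eq_iff, hab, hbc, hcd, hda, hac, hbd, hab.symm, hbc.symm, hcd.symm, hda.symm,
      hac.symm, hbd.symm]
  show ({s(a, b), s(b, c), s(c, d), s(d, a)} : Finset (Sym2 V)).card = 4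
  rw [Finset.card_insert_of_notMem e12, Finset.card_insert_of_notMem e23,
    Finset.card_insert_of_notMem e34, Finset.card_singleton]

lemma edgesOf_subset {q : V × V × V × V} {S : Finset (Sym2 V)} :
    edgesOf q ⊆ S ↔ s(q.1, q.2.1) ∈ S ∧ s(q.2.1, q.2.2.1) ∈ S ∧ s(q.2.2.1, q.2.2.2) ∈ S ∧
      s(q.2.2.2, q.1) ∈ S := by
  simp [edgesOf, Finset.insert_subset_iff]

lemma Quad_eq_filter (f : V → ℕ) {E S : Finset (Sym2 V)} (hSE : S ⊆ E) :
    Quad f S = (Quad f E).filter (fun q => edgesOf q ⊆ S) := by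
  ext ⟨a, b, c, d⟩
  simp only [mem_Quad, Finset.mem_filter, edgesOf_subset]
  constructor
  · rintro ⟨h1, h2, h3, h4, hr⟩
    exact ⟨⟨hSE h1, hSE h2, hSE h3, hSE h4, hr⟩, h1, h2, h3, h4⟩
  · rintro ⟨⟨_, _, _, _, hr⟩, h1, h2, h3, h4⟩
    exact ⟨h1, h2, h3, h4, hr⟩

lemma superset_count {E T : Finset (Sym2 V)} {s : ℕ} (hTE : T ⊆ E) (hT4 : T.card = 4) :
    ((E.powersetCard s).filter (fun S => T ⊆ S)).card ≤ (E.card - 4).choose (s - 4) := by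
  have h : ((E.powersetCard s).filter (fun S => T ⊆ S)).card ≤
      ((E \ T).powersetCard (s - 4)).card :=
    Finset.card_le_card_of_injOn (fun S => S \ T) ?_ ?_
  · refine h.trans ?_
    rw [Finset.card_powersetCard, Finset.card_sdiff_of_subset hTE, hT4]
  · intro S hS
    simp only [Finset.mem_coe, Finset.mem_filter, Finset.mem_powersetCard] at hS ⊢
    obtain ⟨⟨hSE, hScard⟩, hTS⟩ := hS
    refine ⟨Finset.sdiff_subset_sdiff hSE (Finset.Subset.refl T), ?_⟩
    rw [Finset.card_sdiff_of_subset hTS, hScard, hT4]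
  · intro S1 h1 S2 h2 hEq
    simp only [Finset.coe_filter, Set.mem_setOf_eq, Finset.mem_powersetCard] at h1 h2
    have r1 : S1 = S1 \ T ∪ T := (Finset.sdiff_union_of_subset h1.2).symm
    have r2 : S2 = S2 \ T ∪ T := (Finset.sdiff_union_of_subset h2.2).symm
    rw [r1, r2]
    exact congrArg (· ∪ T) hEq

lemma exists_good_subset (f : V → ℕ) (E : Finset (Sym2 V)) (s : ℕ) (hsE : s ≤ E.card) :
    ∃ S₀ ∈ E.powersetCard s,
      (Quad f S₀).card * (E.card.choose s) ≤
        (Quad f E).card * ((E.card - 4).choose (s - 4)) := by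
  set P := E.powersetCard s with hP
  have hPne : P.Nonempty := Finset.powersetCard_nonempty.2 hsE
  obtain ⟨S₀, hS₀P, hmin⟩ := P.exists_min_image (fun S => (Quad f S).card) hPne
  refine ⟨S₀, hS₀P, ?_⟩
  have hPcard : P.card = E.card.choose s := Finset.card_powersetCard s E
  have step1 : (Quad f S₀).card * P.card ≤ ∑ S ∈ P, (Quad f S).card := by
    rw [mul_comm, ← smul_eq_mul]
    exact Finset.card_nsmul_le_sum P _ _ (fun S hS => hmin S hS)
  have step2 : ∑ S ∈ P, (Quad f S).card =
      ∑ q ∈ Quad f E, ((P.filter (fun S => edgesOf q ⊆ S)).card) := by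
    have : ∀ S ∈ P, (Quad f S).card =
        ∑ q ∈ Quad f E, if edgesOf q ⊆ S then 1 else 0 := by
      intro S hS
      have hSE : S ⊆ E := (Finset.mem_powersetCard.1 hS).1
      rw [Quad_eq_filter f hSE, Finset.card_filter]
    rw [Finset.sum_congr rfl this, Finset.sum_comm]
    refine Finset.sum_congr rfl fun q _ => ?_
    rw [Finset.card_filter]
  have step3 : ∑ q ∈ Quad f E, ((P.filter (fun S => edgesOf q ⊆ S)).card) ≤
      (Quad f E).card * ((E.card - 4).choose (s - 4)) := by
    rw [← smul_eq_mul]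
    apply Finset.sum_le_card_nsmul
    rintro ⟨a, b, c, d⟩ hq
    rw [mem_Quad] at hq
    obtain ⟨h1, h2, h3, h4, hab, hbc, hcd, hda, hac, hbd, -⟩ := hq
    have hTE : edgesOf (a, b, c, d) ⊆ E := edgesOf_subset.2 ⟨h1, h2, h3, h4⟩
    exact superset_count hTE (card_edgesOf hab hbc hcd hda hac hbd)
  calc (Quad f S₀).card * (E.card.choose s) = (Quad f S₀).card * P.card := by rw [hPcard]
    _ ≤ _ := step1
    _ = _ := step2
    _ ≤ _ := step3

lemma desc_four (n : ℕ) : n.descFactorial 4 = (n - 3) * ((n - 2) * ((n - 1) * ((n - 0) * 1))) :=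
  rfl

lemma desc_ratio {s m : ℕ} (h : s ≤ m) :
    s.descFactorial 4 * m ^ 4 ≤ m.descFactorial 4 * s ^ 4 := by
  have key : ∀ i : ℕ, (s - i) * m ≤ (m - i) * s := by
    intro i
    rw [Nat.sub_mul, Nat.sub_mul, mul_comm m s]
    exact Nat.sub_le_sub_left (Nat.mul_le_mul_left i h) (s * m)
  have e1 : s.descFactorial 4 * m ^ 4 =
      ((s - 3) * m) * (((s - 2) * m) * (((s - 1) * m) * ((s - 0) * m))) := by
    rw [desc_four]; ring
  have e2 : m.descFactorial 4 * s ^ 4 =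
      ((m - 3) * s) * (((m - 2) * s) * (((m - 1) * s) * ((m - 0) * s))) := by
    rw [desc_four]; ring
  rw [e1, e2]
  exact Nat.mul_le_mul (key 3) (Nat.mul_le_mul (key 2) (Nat.mul_le_mul (key 1) (key 0)))

lemma nat_bound {Qm QE m s : ℕ} (hm : 4 ≤ m) (hm0 : 0 < m) (hs4 : 4 ≤ s) (hsm : s ≤ m)
    (h1 : Qm * m.choose s ≤ QE * ((m - 4).choose (s - 4)))
    (hQE : QE ≤ 2 * (m * m)) :
    Qm * (m * m) ≤ 2 * s ^ 4 := by
  set C' := (m - 4).choose (s - 4) with hC'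
  have hC'pos : 0 < C' := Nat.choose_pos (by omega)
  have h1' : Qm * m.choose s ≤ 2 * (m * m) * C' :=
    h1.trans (Nat.mul_le_mul_right C' hQE)
  have hid : m.choose s * s.choose 4 = m.choose 4 * C' := Nat.choose_mul hs4
  have h2 : (Qm * m.choose 4) * C' ≤ (2 * (m * m) * s.choose 4) * C' := by
    calc (Qm * m.choose 4) * C' = Qm * (m.choose 4 * C') := by ring
      _ = Qm * (m.choose s * s.choose 4) := by rw [← hid]
      _ = (Qm * m.choose s) * s.choose 4 := by ring
      _ ≤ (2 * (m * m) * C') * s.choose 4 := Nat.mul_le_mul_right _ h1'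
      _ = (2 * (m * m) * s.choose 4) * C' := by ring
  have h3 : Qm * m.choose 4 ≤ 2 * (m * m) * s.choose 4 :=
    Nat.le_of_mul_le_mul_right h2 hC'pos
  have h4 : Qm * m.descFactorial 4 ≤ 2 * (m * m) * s.descFactorial 4 := by
    rw [Nat.descFactorial_eq_factorial_mul_choose, Nat.descFactorial_eq_factorial_mul_choose]
    calc Qm * (Nat.factorial 4 * m.choose 4) = Nat.factorial 4 * (Qm * m.choose 4) := by ring
      _ ≤ Nat.factorial 4 * (2 * (m * m) * s.choose 4) := Nat.mul_le_mul_left _ h3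
      _ = 2 * (m * m) * (Nat.factorial 4 * s.choose 4) := by ring
  have hdpos : 0 < m.descFactorial 4 := by
    rw [Nat.descFactorial_eq_factorial_mul_choose]
    exact Nat.mul_pos (Nat.factorial_pos 4) (Nat.choose_pos hm)
  have h5 : (Qm * (m * m)) * (m.descFactorial 4 * (m * m)) ≤
      (2 * s ^ 4) * (m.descFactorial 4 * (m * m)) := by
    calc (Qm * (m * m)) * (m.descFactorial 4 * (m * m))
        = (Qm * m.descFactorial 4) * m ^ 4 := by ring
      _ ≤ (2 * (m * m) * s.descFactorial 4) * m ^ 4 := Nat.mul_le_mul_right _ h4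
      _ = (2 * (m * m)) * (s.descFactorial 4 * m ^ 4) := by ring
      _ ≤ (2 * (m * m)) * (m.descFactorial 4 * s ^ 4) :=
          Nat.mul_le_mul_left _ (desc_ratio hsm)
      _ = (2 * s ^ 4) * (m.descFactorial 4 * (m * m)) := by ring
  exact Nat.le_of_mul_le_mul_right h5 (Nat.mul_pos hdpos (Nat.mul_pos hm0 hm0))

end C4FreeAux

open C4FreeAux in
/-- Every graph `G` with `m` edges contains a `C₄`-free subgraph with at least
`(1/4) * m^(2/3)` edges. -/
theorem stmt11 {V : Type*} [Fintype V] (G : SimpleGraph V) (m : ℕ)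
    (hm : G.edgeSet.ncard = m) :
    ∃ H : SimpleGraph V, H ≤ G ∧
      (¬ ∃ a b c d : V, a ≠ c ∧ b ≠ d ∧
        H.Adj a b ∧ H.Adj b c ∧ H.Adj c d ∧ H.Adj d a) ∧
      (H.edgeSet.ncard : ℝ) ≥ (1 / 4) * (m : ℝ) ^ ((2 : ℝ) / 3) := by
  classical
  have hEm : G.edgeFinset.card = m := by
    rw [← hm, ← SimpleGraph.coe_edgeFinset, Set.ncard_coe_finset]
  set M : ℝ := (m : ℝ) ^ ((2 : ℝ) / 3) with hMdef
  have hM0 : 0 ≤ M := Real.rpow_nonneg (Nat.cast_nonneg m) _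
  have hM3 : M ^ (3 : ℕ) = (m : ℝ) ^ (2 : ℕ) := by
    rw [hMdef, ← Real.rpow_natCast ((m : ℝ) ^ ((2 : ℝ) / 3)) 3,
      ← Real.rpow_mul (Nat.cast_nonneg m), ← Real.rpow_natCast (m : ℝ) 2]
    norm_num
  by_cases hsmall : m ≤ 41
  · -- small case : take min m 3 edges
    obtain ⟨T, hTE, hTcard⟩ := Finset.exists_subset_card_eq (n := min m 3)
      (le_trans (min_le_left _ _) hEm.ge)
    refine ⟨SimpleGraph.fromEdgeSet ↑T, ?_, ?_, ?_⟩
    · have hsub : (↑T : Set (Sym2 V)) ⊆ G.edgeSet := by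
        rw [← SimpleGraph.coe_edgeFinset]
        exact Finset.coe_subset.2 hTE
      calc SimpleGraph.fromEdgeSet ↑T ≤ SimpleGraph.fromEdgeSet G.edgeSet :=
            SimpleGraph.fromEdgeSet_mono hsub
        _ = G := SimpleGraph.fromEdgeSet_edgeSet G
    · rintro ⟨a, b, c, d, hac, hbd, h1, h2, h3, h4⟩
      rw [SimpleGraph.fromEdgeSet_adj] at h1 h2 h3 h4
      have hsub : edgesOf (a, b, c, d) ⊆ T := edgesOf_subset.2
        ⟨Finset.mem_coe.1 h1.1, Finset.mem_coe.1 h2.1, Finset.mem_coe.1 h3.1,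
          Finset.mem_coe.1 h4.1⟩
      have h4le : 4 ≤ T.card := by
        rw [← card_edgesOf h1.2 h2.2 h3.2 h4.2 hac hbd]
        exact Finset.card_le_card hsub
      omega
    · have hset : (SimpleGraph.fromEdgeSet (↑T : Set (Sym2 V))).edgeSet = ↑T := by
        rw [SimpleGraph.edgeSet_fromEdgeSet]
        ext e
        constructor
        · rintro ⟨he, -⟩; exact he
        · intro he
          exact ⟨he, G.not_isDiag_of_mem_edgeSet
            (SimpleGraph.mem_edgeFinset.1 (hTE (Finset.mem_coe.1 he)))⟩
      rw [hset, Set.ncard_coe_finset, hTcard]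
      by_cases hm3 : m ≤ 3
      · rw [min_eq_left hm3]
        rcases Nat.eq_zero_or_pos m with rfl | hm1
        · simp [hMdef, Real.zero_rpow (by norm_num : ((2:ℝ)/3) ≠ 0)]
        · have h1 : (1 : ℝ) ≤ m := by exact_mod_cast hm1
          have hMm : M ≤ (m : ℝ) := by
            rw [hMdef]
            calc (m : ℝ) ^ ((2:ℝ)/3) ≤ (m : ℝ) ^ (1:ℝ) :=
                  Real.rpow_le_rpow_of_exponent_le h1 (by norm_num)
              _ = (m : ℝ) := Real.rpow_one _
          rw [ge_iff_le]
          linarith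
      · rw [min_eq_right (by omega)]
        have hmr : (m : ℝ) ≤ 41 := by exact_mod_cast hsmall
        have hM12 : M ≤ 12 := by
          by_contra h
          push_neg at h
          have h3 : (12:ℝ) ^ (3:ℕ) < M ^ (3:ℕ) :=
            pow_lt_pow_left₀ h (by norm_num) (by norm_num)
          rw [hM3] at h3
          norm_num at h3
          nlinarith [hmr, Nat.cast_nonneg (α := ℝ) m]
        rw [ge_iff_le]
        push_cast
        linarith
  · -- main case : m ≥ 42
    push_neg at hsmall
    have hm42 : 42 ≤ m := hsmall
    have hmr : (42 : ℝ) ≤ (m : ℝ) := by exact_mod_cast hm42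
    have hM12 : (12 : ℝ) ≤ M := by
      by_contra h
      push_neg at h
      have h3 : M ^ (3:ℕ) < (12:ℝ) ^ (3:ℕ) := pow_lt_pow_left₀ h hM0 (by norm_num)
      rw [hM3] at h3
      norm_num at h3
      nlinarith [hmr]
    obtain ⟨f, hf⟩ : ∃ f : V → ℕ, Function.Injective f :=
      ⟨fun v => (Fintype.equivFin V v : ℕ),
        fun u v h => (Fintype.equivFin V).injective (Fin.val_injective h)⟩
    set s : ℕ := ⌊(9 / 20 : ℝ) * M⌋₊ with hs
    have hsle : (s : ℝ) ≤ 9 / 20 * M := Nat.floor_le (by positivity)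
    have hsgt : (9 : ℝ) / 20 * M < s + 1 := Nat.lt_floor_add_one _
    have hs4 : 4 ≤ s := by
      rw [hs]
      apply Nat.le_floor
      push_cast
      linarith
    have hMm : M ≤ (m : ℝ) := by
      rw [hMdef]
      calc (m : ℝ) ^ ((2:ℝ)/3) ≤ (m : ℝ) ^ (1:ℝ) :=
            Real.rpow_le_rpow_of_exponent_le (by linarith) (by norm_num)
        _ = (m : ℝ) := Real.rpow_one _
    have hsm : s ≤ m := by
      have hle : (9:ℝ)/20 * M ≤ (m:ℝ) := by linarith
      calc s = ⌊(9/20:ℝ) * M⌋₊ := rfl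
        _ ≤ ⌊(m:ℝ)⌋₊ := Nat.floor_le_floor hle
        _ = m := Nat.floor_natCast m
    obtain ⟨S₀, hS₀P, hkey⟩ := exists_good_subset f G.edgeFinset s (by rw [hEm]; exact hsm)
    obtain ⟨hS₀E, hS₀card⟩ := Finset.mem_powersetCard.1 hS₀P
    rw [hEm] at hkey
    have hQE := Quad_card_le f G.edgeFinset
    rw [hEm] at hQE
    have hkey2 : (Quad f S₀).card * (m * m) ≤ 2 * s ^ 4 :=
      nat_bound (by omega) (by omega) hs4 hsm
        (hkey.trans (Nat.mul_le_mul_right _ hQE)) (le_refl _) |>.trans (le_refl _)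
    set B := (Quad f S₀).image (fun q => s(q.1, q.2.1)) with hB
    have hBS₀ : B ⊆ S₀ := by
      rw [hB]
      apply Finset.image_subset_iff.2
      rintro ⟨a, b, c, d⟩ hq
      exact (mem_Quad.1 hq).1
    have hBcard : B.card ≤ (Quad f S₀).card := Finset.card_image_le
    refine ⟨SimpleGraph.fromEdgeSet ↑(S₀ \ B), ?_, ?_, ?_⟩
    · have hsub : (↑(S₀ \ B) : Set (Sym2 V)) ⊆ G.edgeSet := by
        rw [← SimpleGraph.coe_edgeFinset]
        exact Finset.coe_subset.2 ((Finset.sdiff_subset).trans hS₀E)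
      calc SimpleGraph.fromEdgeSet ↑(S₀ \ B) ≤ SimpleGraph.fromEdgeSet G.edgeSet :=
            SimpleGraph.fromEdgeSet_mono hsub
        _ = G := SimpleGraph.fromEdgeSet_edgeSet G
    · rintro ⟨a, b, c, d, hac, hbd, h1, h2, h3, h4⟩
      rw [SimpleGraph.fromEdgeSet_adj] at h1 h2 h3 h4
      obtain ⟨⟨qa, qb, qc, qd⟩, hq⟩ := canonicalize hf (S := S₀ \ B)
        (Finset.mem_coe.1 h1.1) (Finset.mem_coe.1 h2.1) (Finset.mem_coe.1 h3.1)
        (Finset.mem_coe.1 h4.1) h1.2 h2.2 h3.2 h4.2 hac hbd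
      have hqS₀ : (qa, qb, qc, qd) ∈ Quad f S₀ := Quad_mono Finset.sdiff_subset hq
      have hfirstB : s(qa, qb) ∈ B := by
        rw [hB]
        exact Finset.mem_image_of_mem _ hqS₀
      have hfirst : s(qa, qb) ∈ S₀ \ B := (mem_Quad.1 hq).1
      exact (Finset.mem_sdiff.1 hfirst).2 hfirstB
    · have hset : (SimpleGraph.fromEdgeSet (↑(S₀ \ B) : Set (Sym2 V))).edgeSet = ↑(S₀ \ B) := by
        rw [SimpleGraph.edgeSet_fromEdgeSet]
        ext e
        constructor
        · rintro ⟨he, -⟩; exact he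
        · intro he
          exact ⟨he, G.not_isDiag_of_mem_edgeSet (SimpleGraph.mem_edgeFinset.1
            (hS₀E ((Finset.sdiff_subset) (Finset.mem_coe.1 he))))⟩
      rw [hset, Set.ncard_coe_finset]
      have hBs : B.card ≤ s := hS₀card ▸ Finset.card_le_card hBS₀
      have hcardR : (((S₀ \ B).card : ℕ) : ℝ) = (s : ℝ) - (B.card : ℝ) := by
        rw [Finset.card_sdiff_of_subset hBS₀, hS₀card, Nat.cast_sub hBs]
      rw [hcardR]
      have hQr : ((Quad f S₀).card : ℝ) * ((m:ℝ) * (m:ℝ)) ≤ 2 * (s:ℝ) ^ 4 := by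
        exact_mod_cast hkey2
      have hs4r : (s : ℝ) ^ 4 ≤ (9/20 * M) ^ 4 := pow_le_pow_left₀ (Nat.cast_nonneg s) hsle 4
      have hM4 : M ^ 4 = M * ((m:ℝ) * (m:ℝ)) := by
        have h2 : ((m:ℝ) * (m:ℝ)) = (m:ℝ) ^ (2:ℕ) := by ring
        rw [h2, ← hM3]
        ring
      have hmpos : (0:ℝ) < (m:ℝ) * (m:ℝ) := by nlinarith [hmr]
      have hQle : ((Quad f S₀).card : ℝ) ≤ 2 * (9/20)^4 * M := by
        have h2 : ((Quad f S₀).card : ℝ) * ((m:ℝ) * (m:ℝ)) ≤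
            (2 * (9/20)^4 * M) * ((m:ℝ) * (m:ℝ)) := by
          calc ((Quad f S₀).card : ℝ) * ((m:ℝ) * (m:ℝ)) ≤ 2 * (s:ℝ) ^ 4 := hQr
            _ ≤ 2 * (9/20 * M) ^ 4 := by linarith
            _ = (2 * (9/20)^4 * M) * ((m:ℝ) * (m:ℝ)) := by rw [mul_pow, hM4]; ring
        exact le_of_mul_le_mul_right h2 hmpos
      have hBr : (B.card : ℝ) ≤ ((Quad f S₀).card : ℝ) := by exact_mod_cast hBcard
      have hc : (2:ℝ) * (9/20)^4 = 6561/80000 := by norm_num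
      rw [ge_iff_le]
      linarith
end

section
/- For integers k >= 2 and r >= 2, with q = 1 + r + ... + r^{k-1}, and p = (1/2) * m^{-1/q} with m >= 1, one has p*m - (k!)^r * p^{r^k} * binomial(m, r) >= (1/4) * m^{(q-1)/q}. -/
lemma fact_le (k : ℕ) : k.factorial ≤ 2 ^ (∑ i ∈ Finset.range k, i) := by
  induction k with
  | zero => simp
  | succ n ih =>
    rw [Finset.sum_range_succ, pow_add, Nat.factorial_succ, mul_comm (2 ^ _)]
    exact Nat.mul_le_mul (Nat.succ_le_of_lt ((Nat.lt_two_pow_self (n := n)))) ih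

lemma expB (k r : ℕ) (hk : 2 ≤ k) (hr : 2 ≤ r) :
    r * (∑ i ∈ Finset.range k, i) + 2 ≤ r ^ k := by
  induction k with
  | zero => omega
  | succ n ih =>
    rcases Nat.lt_or_ge n 2 with h | h
    · interval_cases n
      · omega
      · simp [Finset.sum_range_succ]
        have h1 : 2 * r ≤ r * r := Nat.mul_le_mul_right r hr
        nlinarith
    · have ih' := ih h
      have ha : n ≤ (∑ i ∈ Finset.range n, i) + 1 := by
        have hmem : n - 1 ∈ Finset.range n := by simp; omega
        have := Finset.single_le_sum (f := fun i => (i : ℕ)) (fun i _ => Nat.zero_le i) hmem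
        omega
      rw [Finset.sum_range_succ, pow_succ]
      have h1 : (r * (∑ i ∈ Finset.range n, i) + 2) * r ≤ r ^ n * r :=
        Nat.mul_le_mul_right r ih'
      have h2 : r * n ≤ r * ((∑ i ∈ Finset.range n, i) + 1) := Nat.mul_le_mul_left r ha
      have h3 : 2 * (r * (∑ i ∈ Finset.range n, i)) ≤ r * (r * (∑ i ∈ Finset.range n, i)) :=
        Nat.mul_le_mul_right _ hr
      nlinarith

lemma keyNat (k r : ℕ) (hk : 2 ≤ k) (hr : 2 ≤ r) :
    4 * k.factorial ^ r ≤ 2 ^ (r ^ k) := by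
  calc 4 * k.factorial ^ r ≤ 4 * (2 ^ (∑ i ∈ Finset.range k, i)) ^ r :=
        Nat.mul_le_mul_left _ (Nat.pow_le_pow_left (fact_le k) r)
    _ = 2 ^ (r * (∑ i ∈ Finset.range k, i) + 2) := by
        rw [← pow_mul, pow_add, mul_comm (∑ i ∈ Finset.range k, i) r]; ring
    _ ≤ 2 ^ (r ^ k) := Nat.pow_le_pow_right (by norm_num) (expB k r hk hr)

/-- The key numerical inequality in the hypergraph deletion argument: for `k, r ≥ 2`,
`q = 1 + r + ⋯ + r^(k-1)`, `m ≥ 1` and `p = (1/2) * m^(-1/q)`,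
`p*m - (k!)^r * p^(r^k) * C(m,r) ≥ (1/4) * m^((q-1)/q)`. -/
theorem stmt14 (k r q m : ℕ) (hk : 2 ≤ k) (hr : 2 ≤ r)
    (hq : q = ∑ i ∈ Finset.range k, r ^ i) (hm : 1 ≤ m) (p : ℝ)
    (hp : p = (1 / 2) * (m : ℝ) ^ (-(1 : ℝ) / q)) :
    p * m - (k.factorial : ℝ) ^ r * p ^ (r ^ k) * (m.choose r : ℝ) ≥
      (1 / 4) * (m : ℝ) ^ (((q : ℝ) - 1) / q) := by
  have hq1 : 1 ≤ q := by
    subst hq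
    have hmem : 0 ∈ Finset.range k := by simp; omega
    have := Finset.single_le_sum (f := fun i => r ^ i) (fun i _ => Nat.zero_le _) hmem
    simpa using this
  have hid : r * q + 1 = q + r ^ k := by
    subst hq
    rw [Finset.mul_sum]
    simp_rw [← pow_succ']
    have h1 := Finset.sum_range_succ' (fun i => r ^ i) k
    have h2 := Finset.sum_range_succ (fun i => r ^ i) k
    simp only [pow_zero] at h1
    omega
  have hQ : (0:ℝ) < (q:ℝ) := by exact_mod_cast hq1
  have hM1 : (1:ℝ) ≤ (m:ℝ) := by exact_mod_cast hm
  have hM0 : (0:ℝ) < (m:ℝ) := by linarith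
  set e : ℝ := ((q:ℝ)-1)/q with he
  have hMe : 0 < (m:ℝ) ^ e := Real.rpow_pos_of_pos hM0 e
  have hidR : (r:ℝ) * q + 1 = q + (r:ℝ)^k := by exact_mod_cast hid
  -- term 1
  have h1 : p * m = (1/2) * (m:ℝ) ^ e := by
    rw [hp, mul_assoc]
    congr 1
    nth_rewrite 2 [← Real.rpow_one (m:ℝ)]
    rw [← Real.rpow_add hM0]
    congr 1
    rw [he]; field_simp; ring
  -- term 2
  have hp0 : 0 < p := by
    rw [hp]; positivity
  have hpk : p ^ (r ^ k) = (1/2:ℝ) ^ (r^k) * (m:ℝ) ^ ((-(1:ℝ)/q) * ((r:ℝ)^k)) := by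
    rw [hp, mul_pow]
    congr 1
    rw [← Real.rpow_natCast ((m:ℝ) ^ (-(1:ℝ)/q)) (r^k), ← Real.rpow_mul hM0.le]
    congr 1
    push_cast; ring
  have hexp : (-(1:ℝ)/q) * ((r:ℝ)^k) + r = e := by
    rw [he]; field_simp; linarith
  have hch : (m.choose r : ℝ) ≤ (m:ℝ)^(r:ℕ) / r.factorial := by
    have := Nat.choose_le_pow_div (α := ℝ) r m
    push_cast at this
    exact this
  have hcoef : (k.factorial : ℝ) ^ r * (1/2:ℝ) ^ (r^k) / r.factorial ≤ 1/4 := by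
    have hN : (4:ℝ) * (k.factorial:ℝ)^r ≤ 2^(r^k) := by exact_mod_cast keyNat k r hk hr
    have hrf : (1:ℝ) ≤ r.factorial := by exact_mod_cast r.factorial_pos
    have h2p : (0:ℝ) < 2^(r^k) := by positivity
    have : (k.factorial : ℝ) ^ r * (1/2:ℝ) ^ (r^k) ≤ 1/4 := by
      rw [one_div, inv_pow, ← div_eq_mul_inv, div_le_div_iff₀ h2p (by norm_num)]
      linarith
    calc (k.factorial : ℝ) ^ r * (1/2:ℝ) ^ (r^k) / r.factorial
        ≤ (k.factorial : ℝ) ^ r * (1/2:ℝ) ^ (r^k) / 1 := by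
          apply div_le_div_of_nonneg_left ?_ ?_ hrf <;> positivity
      _ ≤ 1/4 := by simpa using this
  have hT : (k.factorial : ℝ) ^ r * p ^ (r ^ k) * (m.choose r : ℝ) ≤ (1/4) * (m:ℝ)^e := by
    have step1 : (k.factorial : ℝ) ^ r * p ^ (r ^ k) * (m.choose r : ℝ)
        ≤ (k.factorial : ℝ) ^ r * p ^ (r ^ k) * ((m:ℝ)^(r:ℕ) / r.factorial) := by
      apply mul_le_mul_of_nonneg_left hch
      positivity
    refine step1.trans ?_
    rw [hpk]
    have hmm : (m:ℝ) ^ ((-(1:ℝ)/q) * ((r:ℝ)^k)) * (m:ℝ)^(r:ℕ) = (m:ℝ)^e := by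
      rw [← Real.rpow_natCast (m:ℝ) r, ← Real.rpow_add hM0, hexp]
    calc (k.factorial : ℝ) ^ r * ((1/2:ℝ) ^ (r^k) * (m:ℝ) ^ ((-(1:ℝ)/q) * ((r:ℝ)^k))) *
          ((m:ℝ)^(r:ℕ) / r.factorial)
        = ((k.factorial : ℝ) ^ r * (1/2:ℝ) ^ (r^k) / r.factorial) *
            ((m:ℝ) ^ ((-(1:ℝ)/q) * ((r:ℝ)^k)) * (m:ℝ)^(r:ℕ)) := by ring
      _ = ((k.factorial : ℝ) ^ r * (1/2:ℝ) ^ (r^k) / r.factorial) * (m:ℝ)^e := by rw [hmm]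
      _ ≤ (1/4) * (m:ℝ)^e := by
          apply mul_le_mul_of_nonneg_right hcoef hMe.le
  linarith [h1, hT]
end
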